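/- arXiv:1308.6559 — 8 statements merged into one kernel-verified Lean document; each statement's English description precedes it below -/
import Mathlib

section
/- Let (φ1, φ2) be an admissible nondecreasing pair and let 0 < m1 ≤ m2 be reals. Then for every t ∈ [0,1], the pair of functions x ↦ F_{φ1,m1}(x,t) and x ↦ F_{φ2,m2}(x,t) is again an admissible nondecreasing pair; that is, both are twice differentiable in x with bounded first and second derivatives, nondecreasing, convex, F_{φ1,m1}(x,t) ≤ F_{φ2,m2}(x,t) for all x, and ∂ₓF_{φ1,m1}(x,t) ≤ ∂ₓF_{φ2,m2}(x,t) for all x. -/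
open MeasureTheory ProbabilityTheory Set

/-- `parisiF φ m x t = (1/m) log E[exp (m φ(x + √t Z))]` with `Z` standard Gaussian. -/
noncomputable def parisiF (φ : ℝ → ℝ) (m : ℝ) (x t : ℝ) : ℝ :=
  (1 / m) * Real.log (∫ z, Real.exp (m * φ (x + Real.sqrt t * z)) ∂(gaussianReal 0 1))

/-- `φ` is twice differentiable with bounded first and second derivatives. -/
def TwiceDiffBounded (φ : ℝ → ℝ) : Prop :=
  Differentiable ℝ φ ∧ Differentiable ℝ (deriv φ) ∧
    (∃ C, ∀ x, |deriv φ x| ≤ C) ∧ (∃ C, ∀ x, |deriv (deriv φ) x| ≤ C)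

/-- An admissible nondecreasing pair. -/
def AdmissibleNondecPair (φ1 φ2 : ℝ → ℝ) : Prop :=
  TwiceDiffBounded φ1 ∧ TwiceDiffBounded φ2 ∧
    Monotone φ1 ∧ Monotone φ2 ∧
    ConvexOn ℝ Set.univ φ1 ∧ ConvexOn ℝ Set.univ φ2 ∧
    (∀ x, φ1 x ≤ φ2 x) ∧ (∀ x, deriv φ1 x ≤ deriv φ2 x)


namespace ParisiAux

local notation "γ" => gaussianReal 0 1

lemma integrable_exp_mul_gauss (c : ℝ) :
    Integrable (fun z => Real.exp (c * z)) γ := by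
  rw [gaussianReal_of_var_ne_zero 0 one_ne_zero,
    integrable_withDensity_iff (measurable_gaussianPDF 0 1)
      (Filter.Eventually.of_forall fun x => ENNReal.ofReal_lt_top)]
  have hpdf : ∀ x : ℝ, (gaussianPDF 0 1 x).toReal = gaussianPDFReal 0 1 x := fun x =>
    ENNReal.toReal_ofReal (gaussianPDFReal_nonneg 0 1 x)
  refine Integrable.mono'
    ((integrable_exp_neg_mul_sq (by norm_num : (0:ℝ) < 1/4)).const_mul
      ((Real.sqrt (2 * Real.pi))⁻¹ * Real.exp (c ^ 2))) ?_ ?_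
  · exact ((Real.continuous_exp.comp (continuous_const.mul continuous_id)).aestronglyMeasurable).mul
      ((measurable_gaussianPDF 0 1).ennreal_toReal.aestronglyMeasurable)
  · filter_upwards with x
    rw [hpdf]
    have h1 : gaussianPDFReal 0 1 x = (Real.sqrt (2 * Real.pi))⁻¹ * Real.exp (-x ^ 2 / 2) := by
      simp [gaussianPDFReal]
    rw [h1, Real.norm_eq_abs, abs_of_nonneg (by positivity)]
    have h2 : Real.exp (c * x) * Real.exp (-x ^ 2 / 2)
        ≤ Real.exp (c ^ 2) * Real.exp (-(1/4) * x ^ 2) := by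
      rw [← Real.exp_add, ← Real.exp_add]
      apply Real.exp_le_exp.2
      nlinarith [sq_nonneg (c - x / 2)]
    calc Real.exp (c * x) * ((Real.sqrt (2 * Real.pi))⁻¹ * Real.exp (-x ^ 2 / 2))
        = (Real.sqrt (2 * Real.pi))⁻¹ * (Real.exp (c * x) * Real.exp (-x ^ 2 / 2)) := by ring
      _ ≤ (Real.sqrt (2 * Real.pi))⁻¹ * (Real.exp (c ^ 2) * Real.exp (-(1/4) * x ^ 2)) := by
          have : (0:ℝ) ≤ (Real.sqrt (2 * Real.pi))⁻¹ := by positivity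
          exact mul_le_mul_of_nonneg_left h2 this
      _ = (Real.sqrt (2 * Real.pi))⁻¹ * Real.exp (c ^ 2) * Real.exp (-(1/4) * x ^ 2) := by ring

lemma integrable_exp_abs_gauss (c : ℝ) :
    Integrable (fun z => Real.exp (c * |z|)) γ := by
  refine Integrable.mono' ((integrable_exp_mul_gauss c).add (integrable_exp_mul_gauss (-c))) ?_ ?_
  · exact (Real.continuous_exp.comp (continuous_const.mul continuous_abs)).aestronglyMeasurable
  · filter_upwards with x
    rw [Real.norm_eq_abs, abs_of_nonneg (Real.exp_pos _).le]
    rcases abs_choice x with h | h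
    · rw [h]
      exact le_add_of_nonneg_right (Real.exp_pos _).le
    · rw [h]
      have : c * -x = -c * x := by ring
      rw [this]
      exact le_add_of_nonneg_left (Real.exp_pos _).le

/-- Cauchy–Schwarz for integrals of nonneg real functions. -/
lemma sq_integral_mul_le {α : Type*} [MeasurableSpace α] {μ : Measure α} {a b : α → ℝ}
    (hab : Integrable (fun x => a x * b x) μ)
    (ha : Integrable (fun x => a x ^ 2) μ) (hb : Integrable (fun x => b x ^ 2) μ)
    (hb0 : ∀ x, 0 ≤ b x) :
    (∫ x, a x * b x ∂μ) ^ 2 ≤ (∫ x, a x ^ 2 ∂μ) * (∫ x, b x ^ 2 ∂μ) := by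
  set A := ∫ x, a x ^ 2 ∂μ with hA
  set B := ∫ x, a x * b x ∂μ with hB
  set K := ∫ x, b x ^ 2 ∂μ with hK
  have hK0 : 0 ≤ K := integral_nonneg fun x => sq_nonneg _
  rcases eq_or_lt_of_le hK0 with hKz | hKpos
  · -- K = 0 : b = 0 a.e., so B = 0
    have hbz : (fun x => b x ^ 2) =ᵐ[μ] 0 := by
      rw [← integral_eq_zero_iff_of_nonneg (fun x => sq_nonneg (b x)) hb]
      exact hKz.symm
    have hbz' : (fun x => a x * b x) =ᵐ[μ] 0 := by
      filter_upwards [hbz] with x hx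
      have hb2 : b x ^ 2 = 0 := hx
      have : b x = 0 := by
        have := sq_nonneg (b x)
        nlinarith [hb0 x]
      simp [this]
    have hBz : B = 0 := by rw [hB, integral_congr_ae hbz']; simp
    have hA0 : 0 ≤ A := integral_nonneg fun x => sq_nonneg _
    rw [hBz, ← hKz]
    simp
  · have i1 : Integrable (fun x => K ^ 2 * a x ^ 2 - 2 * K * B * (a x * b x)) μ :=
      (ha.const_mul _).sub (hab.const_mul _)
    have i2 : Integrable (fun x => B ^ 2 * b x ^ 2) μ := hb.const_mul _
    have key : 0 ≤ K * (K * A - B ^ 2) := by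
      have h0 : 0 ≤ ∫ x, (K * a x - B * b x) ^ 2 ∂μ := integral_nonneg fun x => sq_nonneg _
      have hexp : ∀ x, (K * a x - B * b x) ^ 2
          = K ^ 2 * a x ^ 2 - 2 * K * B * (a x * b x) + B ^ 2 * b x ^ 2 := by
        intro x; ring
      rw [integral_congr_ae (Filter.Eventually.of_forall hexp), integral_add i1 i2,
        integral_sub (ha.const_mul _) (hab.const_mul _), integral_const_mul, integral_const_mul,
        integral_const_mul] at h0
      nlinarith [h0]
    nlinarith [key, hKpos]


/-- Likelihood-ratio / FKG type correlation inequality. -/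
lemma correlation_le {α : Type*} [MeasurableSpace α] [LinearOrder α] {μ : Measure α}
    [SigmaFinite μ] {f w1 w2 : α → ℝ}
    (hfw1 : Integrable (fun x => f x * w1 x) μ) (hfw2 : Integrable (fun x => f x * w2 x) μ)
    (hw1 : Integrable w1 μ) (hw2 : Integrable w2 μ)
    (hf : ∀ a b, a ≤ b → f a ≤ f b)
    (hr : ∀ a b, a ≤ b → w2 a * w1 b ≤ w2 b * w1 a) :
    (∫ x, f x * w1 x ∂μ) * (∫ x, w2 x ∂μ) ≤ (∫ x, f x * w2 x ∂μ) * (∫ x, w1 x ∂μ) := by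
  set P := μ.prod μ with hP
  have hHnn : ∀ p : α × α, 0 ≤ (f p.1 - f p.2) * (w2 p.1 * w1 p.2 - w1 p.1 * w2 p.2) := by
    rintro ⟨z, y⟩
    rcases le_total y z with hzy | hzy
    · have h1 : f y ≤ f z := hf _ _ hzy
      have h2 : w2 y * w1 z ≤ w2 z * w1 y := hr _ _ hzy
      exact mul_nonneg (by linarith) (by dsimp; linarith)
    · have h1 : f z ≤ f y := hf _ _ hzy
      have h2 : w2 z * w1 y ≤ w2 y * w1 z := hr _ _ hzy
      have h3 : w2 z * w1 y - w1 z * w2 y ≤ 0 := by linarith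
      nlinarith [h1, h3]
  have h0 : 0 ≤ ∫ p : α × α, (f p.1 - f p.2) * (w2 p.1 * w1 p.2 - w1 p.1 * w2 p.2) ∂P :=
    integral_nonneg hHnn
  have hexp : ∀ p : α × α, (f p.1 - f p.2) * (w2 p.1 * w1 p.2 - w1 p.1 * w2 p.2)
      = ((f p.1 * w2 p.1) * w1 p.2 + w1 p.1 * (f p.2 * w2 p.2))
        - ((f p.1 * w1 p.1) * w2 p.2 + w2 p.1 * (f p.2 * w1 p.2)) := by
    rintro ⟨z, y⟩; dsimp; ring
  have iA : Integrable (fun p : α × α => f p.1 * w2 p.1 * w1 p.2) P := hfw2.mul_prod hw1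
  have iB : Integrable (fun p : α × α => w1 p.1 * (f p.2 * w2 p.2)) P := hw1.mul_prod hfw2
  have iC : Integrable (fun p : α × α => f p.1 * w1 p.1 * w2 p.2) P := hfw1.mul_prod hw2
  have iD : Integrable (fun p : α × α => w2 p.1 * (f p.2 * w1 p.2)) P := hw2.mul_prod hfw1
  have iAB : Integrable (fun p : α × α => f p.1 * w2 p.1 * w1 p.2
      + w1 p.1 * (f p.2 * w2 p.2)) P := iA.add iB
  have iCD : Integrable (fun p : α × α => f p.1 * w1 p.1 * w2 p.2
      + w2 p.1 * (f p.2 * w1 p.2)) P := iC.add iD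
  rw [integral_congr_ae (Filter.Eventually.of_forall hexp), integral_sub iAB iCD,
    integral_add iA iB, integral_add iC iD, hP,
    integral_prod_mul (fun x => f x * w2 x) w1, integral_prod_mul w1 (fun x => f x * w2 x),
    integral_prod_mul (fun x => f x * w1 x) w2, integral_prod_mul w2 (fun x => f x * w1 x)] at h0
  linarith

/-- The derivative of a differentiable monotone function is nonnegative. -/
lemma deriv_nonneg_of_monotone {f : ℝ → ℝ} {x : ℝ} (hf : Monotone f)
    (hfd : DifferentiableAt ℝ f x) : 0 ≤ deriv f x := by
  have h := hfd.hasDerivAt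
  rw [hasDerivAt_iff_tendsto_slope] at h
  have h' : Filter.Tendsto (slope f x) (nhdsWithin x (Set.Ioi x)) (nhds (deriv f x)) :=
    h.mono_left (nhdsWithin_mono x fun y (hy : y ∈ Set.Ioi x) =>
      Set.mem_compl_singleton_iff.2 (ne_of_gt hy))
  refine ge_of_tendsto h' ?_
  filter_upwards [self_mem_nhdsWithin] with y hy
  have hxy : x < y := hy
  rw [slope_def_field]
  exact div_nonneg (by linarith [hf hxy.le]) (by linarith)


noncomputable def gI (φ : ℝ → ℝ) (m s x : ℝ) : ℝ :=
  ∫ z, Real.exp (m * φ (x + s * z)) ∂γ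

noncomputable def gI1 (φ : ℝ → ℝ) (m s x : ℝ) : ℝ :=
  ∫ z, Real.exp (m * φ (x + s * z)) * (m * deriv φ (x + s * z)) ∂γ

noncomputable def gI2 (φ : ℝ → ℝ) (m s x : ℝ) : ℝ :=
  ∫ z, Real.exp (m * φ (x + s * z))
    * (m * deriv (deriv φ) (x + s * z) + (m * deriv φ (x + s * z)) ^ 2) ∂γ

section Core

variable {φ : ℝ → ℝ} {m s C D : ℝ}

lemma C_nonneg (hC : ∀ x, |deriv φ x| ≤ C) : 0 ≤ C := (abs_nonneg _).trans (hC 0)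

lemma phi_le (hφ : Differentiable ℝ φ) (hC : ∀ x, |deriv φ x| ≤ C) (y : ℝ) :
    φ y ≤ φ 0 + C * |y| := by
  have h := convex_univ.norm_image_sub_le_of_norm_deriv_le (f := φ)
    (fun x _ => (hφ x)) (fun x _ => by rw [Real.norm_eq_abs]; exact hC x)
    (Set.mem_univ (0 : ℝ)) (Set.mem_univ y)
  rw [Real.norm_eq_abs, Real.norm_eq_abs, sub_zero] at h
  have := le_abs_self (φ y - φ 0)
  linarith

lemma exp_arg_le (hφ : Differentiable ℝ φ) (hC : ∀ x, |deriv φ x| ≤ C)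
    (hm : 0 < m) (hs : 0 ≤ s) {R x : ℝ} (hx : |x| ≤ R) (z : ℝ) :
    m * φ (x + s * z) ≤ m * (φ 0 + C * R) + m * C * s * |z| := by
  have hC0 : 0 ≤ C := C_nonneg hC
  have h1 : φ (x + s * z) ≤ φ 0 + C * |x + s * z| := phi_le hφ hC _
  have h2 : |x + s * z| ≤ R + s * |z| := by
    calc |x + s * z| ≤ |x| + |s * z| := abs_add_le _ _
      _ = |x| + s * |z| := by rw [abs_mul, abs_of_nonneg hs]
      _ ≤ R + s * |z| := by linarith
  nlinarith [mul_le_mul_of_nonneg_left (h1.trans (by nlinarith : φ 0 + C * |x + s * z|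
    ≤ φ 0 + C * R + C * s * |z|)) hm.le]

lemma exp_integrand_le (hφ : Differentiable ℝ φ) (hC : ∀ x, |deriv φ x| ≤ C)
    (hm : 0 < m) (hs : 0 ≤ s) {R x : ℝ} (hx : |x| ≤ R) (z : ℝ) :
    Real.exp (m * φ (x + s * z))
      ≤ Real.exp (m * (φ 0 + C * R)) * Real.exp (m * C * s * |z|) := by
  rw [← Real.exp_add]
  exact Real.exp_le_exp.2 (exp_arg_le hφ hC hm hs hx z)

lemma cont_inner (x : ℝ) : Continuous fun z : ℝ => x + s * z :=
  continuous_const.add (continuous_const.mul continuous_id)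

lemma integrable_exp_integrand (hφ : Differentiable ℝ φ) (hC : ∀ x, |deriv φ x| ≤ C)
    (hm : 0 < m) (hs : 0 ≤ s) (x : ℝ) :
    Integrable (fun z => Real.exp (m * φ (x + s * z))) γ := by
  refine Integrable.mono'
    ((integrable_exp_abs_gauss (m * C * s)).const_mul (Real.exp (m * (φ 0 + C * |x|)))) ?_ ?_
  · exact (Real.continuous_exp.comp
      (continuous_const.mul (hφ.continuous.comp (cont_inner x)))).aestronglyMeasurable
  · filter_upwards with z
    rw [Real.norm_eq_abs, abs_of_nonneg (Real.exp_pos _).le]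
    exact exp_integrand_le hφ hC hm hs le_rfl z

lemma gI_pos (hφ : Differentiable ℝ φ) (hC : ∀ x, |deriv φ x| ≤ C)
    (hm : 0 < m) (hs : 0 ≤ s) (x : ℝ) : 0 < gI φ m s x := by
  rw [gI, ]
  rw [integral_pos_iff_support_of_nonneg (fun z => (Real.exp_pos _).le)
    (integrable_exp_integrand hφ hC hm hs x)]
  have hsupp : (Function.support fun z : ℝ => Real.exp (m * φ (x + s * z))) = Set.univ :=
    Set.eq_univ_of_forall fun z => (Real.exp_pos _).ne'
  rw [hsupp]
  simp

lemma integrable_gI1_integrand (hφ : Differentiable ℝ φ) (hφ' : Differentiable ℝ (deriv φ))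
    (hC : ∀ x, |deriv φ x| ≤ C) (hm : 0 < m) (hs : 0 ≤ s) (x : ℝ) :
    Integrable (fun z => Real.exp (m * φ (x + s * z)) * (m * deriv φ (x + s * z))) γ := by
  refine Integrable.mono' (((integrable_exp_abs_gauss (m * C * s)).const_mul
    (Real.exp (m * (φ 0 + C * |x|)))).const_mul (m * C)) ?_ ?_
  · exact ((Real.continuous_exp.comp
      (continuous_const.mul (hφ.continuous.comp (cont_inner x)))).mul
      (continuous_const.mul (hφ'.continuous.comp (cont_inner x)))).aestronglyMeasurable
  · filter_upwards with z
    rw [Real.norm_eq_abs, abs_mul, abs_of_nonneg (Real.exp_pos _).le, abs_mul,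
      abs_of_nonneg hm.le]
    calc Real.exp (m * φ (x + s * z)) * (m * |deriv φ (x + s * z)|)
        ≤ (Real.exp (m * (φ 0 + C * |x|)) * Real.exp (m * C * s * |z|)) * (m * C) := by
          apply mul_le_mul (exp_integrand_le hφ hC hm hs le_rfl z)
            (mul_le_mul_of_nonneg_left (hC _) hm.le)
            (by positivity) (by positivity)
      _ = m * C * (Real.exp (m * (φ 0 + C * |x|)) * Real.exp (m * C * s * |z|)) := by ring

end Core


section Core2

variable {φ : ℝ → ℝ} {m s C D : ℝ}

lemma integrable_gI2_integrand (hφ : Differentiable ℝ φ) (hφ' : Differentiable ℝ (deriv φ))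
    (hC : ∀ x, |deriv φ x| ≤ C) (hD : ∀ x, |deriv (deriv φ) x| ≤ D)
    (hm : 0 < m) (hs : 0 ≤ s) (x : ℝ) :
    Integrable (fun z => Real.exp (m * φ (x + s * z))
      * (m * deriv (deriv φ) (x + s * z) + (m * deriv φ (x + s * z)) ^ 2)) γ := by
  have hmeas : AEStronglyMeasurable (fun z : ℝ => Real.exp (m * φ (x + s * z))
      * (m * deriv (deriv φ) (x + s * z) + (m * deriv φ (x + s * z)) ^ 2)) γ := by
    have h1 : Measurable fun z : ℝ => x + s * z :=
      measurable_const.add (measurable_id.const_mul s)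
    refine AEStronglyMeasurable.mul ?_ ?_
    · exact (Real.continuous_exp.comp
        (continuous_const.mul (hφ.continuous.comp (cont_inner x)))).aestronglyMeasurable
    · refine Measurable.aestronglyMeasurable ?_
      exact (((measurable_deriv (deriv φ)).comp h1).const_mul m).add
        (((((measurable_deriv φ).comp h1).const_mul m)).pow_const 2)
  refine Integrable.mono' (((integrable_exp_abs_gauss (m * C * s)).const_mul
    (Real.exp (m * (φ 0 + C * |x|)))).const_mul (m * D + (m * C) ^ 2)) hmeas ?_
  filter_upwards with z
  rw [Real.norm_eq_abs, abs_mul, abs_of_nonneg (Real.exp_pos _).le]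
  have hfac : |m * deriv (deriv φ) (x + s * z) + (m * deriv φ (x + s * z)) ^ 2|
      ≤ m * D + (m * C) ^ 2 := by
    have h1 : |m * deriv (deriv φ) (x + s * z)| ≤ m * D := by
      rw [abs_mul, abs_of_nonneg hm.le]
      exact mul_le_mul_of_nonneg_left (hD _) hm.le
    have h2 : |(m * deriv φ (x + s * z)) ^ 2| ≤ (m * C) ^ 2 := by
      rw [abs_of_nonneg (sq_nonneg _)]
      have h5 := abs_le.1 (hC (x + s * z))
      have h4 : deriv φ (x + s * z) ^ 2 ≤ C ^ 2 := sq_le_sq' h5.1 h5.2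
      nlinarith [mul_le_mul_of_nonneg_left h4 (sq_nonneg m)]
    calc |m * deriv (deriv φ) (x + s * z) + (m * deriv φ (x + s * z)) ^ 2|
        ≤ |m * deriv (deriv φ) (x + s * z)| + |(m * deriv φ (x + s * z)) ^ 2| := abs_add_le _ _
      _ ≤ m * D + (m * C) ^ 2 := add_le_add h1 h2
  calc Real.exp (m * φ (x + s * z)) * |m * deriv (deriv φ) (x + s * z)
        + (m * deriv φ (x + s * z)) ^ 2|
      ≤ (Real.exp (m * (φ 0 + C * |x|)) * Real.exp (m * C * s * |z|)) * (m * D + (m * C) ^ 2) := by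
        apply mul_le_mul (exp_integrand_le hφ hC hm hs le_rfl z) hfac (abs_nonneg _) (by positivity)
    _ = (m * D + (m * C) ^ 2) * (Real.exp (m * (φ 0 + C * |x|)) * Real.exp (m * C * s * |z|)) := by
        ring

lemma hasDerivAt_inner_exp (hφ : Differentiable ℝ φ) (z x : ℝ) :
    HasDerivAt (fun x => Real.exp (m * φ (x + s * z)))
      (Real.exp (m * φ (x + s * z)) * (m * deriv φ (x + s * z))) x := by
  have h1 : HasDerivAt (fun x : ℝ => x + s * z) 1 x := (hasDerivAt_id x).add_const _
  have h2 : HasDerivAt (fun x => φ (x + s * z)) (deriv φ (x + s * z) * 1) x :=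
    (hφ _).hasDerivAt.comp x h1
  have h3 := (h2.const_mul m).exp
  simpa using h3

lemma hasDerivAt_gI (hφ : Differentiable ℝ φ) (hC : ∀ x, |deriv φ x| ≤ C)
    (hm : 0 < m) (hs : 0 ≤ s) (x₀ : ℝ) :
    HasDerivAt (gI φ m s) (gI1 φ m s x₀) x₀ := by
  have key := hasDerivAt_integral_of_dominated_loc_of_deriv_le (μ := γ)
    (F := fun x z => Real.exp (m * φ (x + s * z)))
    (F' := fun x z => Real.exp (m * φ (x + s * z)) * (m * deriv φ (x + s * z)))
    (x₀ := x₀)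
    (bound := fun z => m * C * (Real.exp (m * (φ 0 + C * (|x₀| + 1)))
      * Real.exp (m * C * s * |z|)))
    (s := Metric.ball x₀ 1) (Metric.ball_mem_nhds x₀ one_pos)
    (Filter.Eventually.of_forall fun x => (Real.continuous_exp.comp
      (continuous_const.mul (hφ.continuous.comp (cont_inner x)))).aestronglyMeasurable)
    (integrable_exp_integrand hφ hC hm hs x₀)
    ((Real.continuous_exp.comp (continuous_const.mul
      (hφ.continuous.comp (cont_inner x₀)))).aestronglyMeasurable.mul
        (measurable_const.mul (((measurable_deriv φ).comp
          (measurable_const.add (measurable_id.const_mul s)))) : Measurable _).aestronglyMeasurable)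
    ?_ (((integrable_exp_abs_gauss (m * C * s)).const_mul _).const_mul _) ?_
  · exact key.2
  · filter_upwards with z
    intro x hx
    have hxb : |x| ≤ |x₀| + 1 := by
      have := mem_ball_iff_norm.1 hx
      rw [Real.norm_eq_abs] at this
      have h1 := abs_sub_abs_le_abs_sub x x₀
      linarith
    rw [Real.norm_eq_abs, abs_mul, abs_of_nonneg (Real.exp_pos _).le, abs_mul,
      abs_of_nonneg hm.le]
    calc Real.exp (m * φ (x + s * z)) * (m * |deriv φ (x + s * z)|)
        ≤ (Real.exp (m * (φ 0 + C * (|x₀| + 1))) * Real.exp (m * C * s * |z|)) * (m * C) :=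
          mul_le_mul (exp_integrand_le hφ hC hm hs hxb z)
            (mul_le_mul_of_nonneg_left (hC _) hm.le) (by positivity) (by positivity)
      _ = m * C * (Real.exp (m * (φ 0 + C * (|x₀| + 1))) * Real.exp (m * C * s * |z|)) := by ring
  · filter_upwards with z
    intro x hx
    exact hasDerivAt_inner_exp hφ z x

end Core2


section Core3

variable {φ : ℝ → ℝ} {m s C D : ℝ}

lemma hasDerivAt_gI1 (hφ : Differentiable ℝ φ) (hφ' : Differentiable ℝ (deriv φ))
    (hC : ∀ x, |deriv φ x| ≤ C) (hD : ∀ x, |deriv (deriv φ) x| ≤ D)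
    (hm : 0 < m) (hs : 0 ≤ s) (x₀ : ℝ) :
    HasDerivAt (gI1 φ m s) (gI2 φ m s x₀) x₀ := by
  have key := hasDerivAt_integral_of_dominated_loc_of_deriv_le (μ := γ)
    (F := fun x z => Real.exp (m * φ (x + s * z)) * (m * deriv φ (x + s * z)))
    (F' := fun x z => Real.exp (m * φ (x + s * z))
      * (m * deriv (deriv φ) (x + s * z) + (m * deriv φ (x + s * z)) ^ 2))
    (x₀ := x₀)
    (bound := fun z => (m * D + (m * C) ^ 2) * (Real.exp (m * (φ 0 + C * (|x₀| + 1)))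
      * Real.exp (m * C * s * |z|)))
    (s := Metric.ball x₀ 1) (Metric.ball_mem_nhds x₀ one_pos)
    (Filter.Eventually.of_forall fun x => ((Real.continuous_exp.comp
      (continuous_const.mul (hφ.continuous.comp (cont_inner x)))).mul
      (continuous_const.mul (hφ'.continuous.comp (cont_inner x)))).aestronglyMeasurable)
    (integrable_gI1_integrand hφ hφ' hC hm hs x₀)
    (integrable_gI2_integrand hφ hφ' hC hD hm hs x₀).aestronglyMeasurable
    ?_ (((integrable_exp_abs_gauss (m * C * s)).const_mul _).const_mul _) ?_
  · exact key.2
  · filter_upwards with z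
    intro x hx
    have hxb : |x| ≤ |x₀| + 1 := by
      have := mem_ball_iff_norm.1 hx
      rw [Real.norm_eq_abs] at this
      have h1 := abs_sub_abs_le_abs_sub x x₀
      linarith
    rw [Real.norm_eq_abs, abs_mul, abs_of_nonneg (Real.exp_pos _).le]
    have hfac : |m * deriv (deriv φ) (x + s * z) + (m * deriv φ (x + s * z)) ^ 2|
        ≤ m * D + (m * C) ^ 2 := by
      have h1 : |m * deriv (deriv φ) (x + s * z)| ≤ m * D := by
        rw [abs_mul, abs_of_nonneg hm.le]
        exact mul_le_mul_of_nonneg_left (hD _) hm.le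
      have h2 : |(m * deriv φ (x + s * z)) ^ 2| ≤ (m * C) ^ 2 := by
        rw [abs_of_nonneg (sq_nonneg _)]
        have h5 := abs_le.1 (hC (x + s * z))
        have h4 : deriv φ (x + s * z) ^ 2 ≤ C ^ 2 := sq_le_sq' h5.1 h5.2
        nlinarith [mul_le_mul_of_nonneg_left h4 (sq_nonneg m)]
      calc |m * deriv (deriv φ) (x + s * z) + (m * deriv φ (x + s * z)) ^ 2|
          ≤ |m * deriv (deriv φ) (x + s * z)| + |(m * deriv φ (x + s * z)) ^ 2| := abs_add_le _ _
        _ ≤ m * D + (m * C) ^ 2 := add_le_add h1 h2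
    calc Real.exp (m * φ (x + s * z)) * |m * deriv (deriv φ) (x + s * z)
          + (m * deriv φ (x + s * z)) ^ 2|
        ≤ (Real.exp (m * (φ 0 + C * (|x₀| + 1))) * Real.exp (m * C * s * |z|))
            * (m * D + (m * C) ^ 2) :=
          mul_le_mul (exp_integrand_le hφ hC hm hs hxb z) hfac (abs_nonneg _) (by positivity)
      _ = (m * D + (m * C) ^ 2) * (Real.exp (m * (φ 0 + C * (|x₀| + 1)))
            * Real.exp (m * C * s * |z|)) := by ring
  · filter_upwards with z
    intro x hx
    have h1 : HasDerivAt (fun x : ℝ => x + s * z) 1 x := (hasDerivAt_id x).add_const _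
    have h4 : HasDerivAt (fun x => m * deriv φ (x + s * z))
        (m * (deriv (deriv φ) (x + s * z) * 1)) x := ((hφ' _).hasDerivAt.comp x h1).const_mul m
    have h5 := (hasDerivAt_inner_exp (m := m) (s := s) hφ z x).mul h4
    exact h5.congr_deriv (by ring)

end Core3


section Core4

variable {φ : ℝ → ℝ} {m s C D : ℝ}

lemma abs_gI1_le (hφ : Differentiable ℝ φ) (hφ' : Differentiable ℝ (deriv φ))
    (hC : ∀ x, |deriv φ x| ≤ C) (hm : 0 < m) (hs : 0 ≤ s) (x : ℝ) :
    |gI1 φ m s x| ≤ m * C * gI φ m s x := by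
  have h1 : |gI1 φ m s x| ≤ ∫ z, |Real.exp (m * φ (x + s * z))
      * (m * deriv φ (x + s * z))| ∂γ := by
    rw [gI1, ← Real.norm_eq_abs]
    refine (norm_integral_le_integral_norm _).trans ?_
    simp only [Real.norm_eq_abs, le_refl]
  refine h1.trans ?_
  rw [gI, ← integral_const_mul]
  apply integral_mono ((integrable_gI1_integrand hφ hφ' hC hm hs x).abs)
    ((integrable_exp_integrand hφ hC hm hs x).const_mul _)
  intro z
  dsimp only
  rw [abs_mul, abs_of_nonneg (Real.exp_pos _).le, abs_mul, abs_of_nonneg hm.le]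
  calc Real.exp (m * φ (x + s * z)) * (m * |deriv φ (x + s * z)|)
      ≤ Real.exp (m * φ (x + s * z)) * (m * C) := by
        exact mul_le_mul_of_nonneg_left (mul_le_mul_of_nonneg_left (hC _) hm.le)
          (Real.exp_pos _).le
    _ = m * C * Real.exp (m * φ (x + s * z)) := by ring

lemma gI1_nonneg (hm : 0 < m) (hd : ∀ x, 0 ≤ deriv φ x) (x : ℝ) : 0 ≤ gI1 φ m s x :=
  integral_nonneg fun z => mul_nonneg (Real.exp_pos _).le (mul_nonneg hm.le (hd _))

lemma abs_gI2_le (hφ : Differentiable ℝ φ) (hφ' : Differentiable ℝ (deriv φ))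
    (hC : ∀ x, |deriv φ x| ≤ C) (hD : ∀ x, |deriv (deriv φ) x| ≤ D)
    (hm : 0 < m) (hs : 0 ≤ s) (x : ℝ) :
    |gI2 φ m s x| ≤ (m * D + (m * C) ^ 2) * gI φ m s x := by
  have h1 : |gI2 φ m s x| ≤ ∫ z, |Real.exp (m * φ (x + s * z))
      * (m * deriv (deriv φ) (x + s * z) + (m * deriv φ (x + s * z)) ^ 2)| ∂γ := by
    rw [gI2, ← Real.norm_eq_abs]
    refine (norm_integral_le_integral_norm _).trans ?_
    simp only [Real.norm_eq_abs, le_refl]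
  refine h1.trans ?_
  rw [gI, ← integral_const_mul]
  apply integral_mono ((integrable_gI2_integrand hφ hφ' hC hD hm hs x).abs)
    ((integrable_exp_integrand hφ hC hm hs x).const_mul _)
  intro z
  dsimp only
  rw [abs_mul, abs_of_nonneg (Real.exp_pos _).le]
  have hfac : |m * deriv (deriv φ) (x + s * z) + (m * deriv φ (x + s * z)) ^ 2|
      ≤ m * D + (m * C) ^ 2 := by
    have h1 : |m * deriv (deriv φ) (x + s * z)| ≤ m * D := by
      rw [abs_mul, abs_of_nonneg hm.le]
      exact mul_le_mul_of_nonneg_left (hD _) hm.le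
    have h2 : |(m * deriv φ (x + s * z)) ^ 2| ≤ (m * C) ^ 2 := by
      rw [abs_of_nonneg (sq_nonneg _)]
      have h5 := abs_le.1 (hC (x + s * z))
      have h4 : deriv φ (x + s * z) ^ 2 ≤ C ^ 2 := sq_le_sq' h5.1 h5.2
      nlinarith [mul_le_mul_of_nonneg_left h4 (sq_nonneg m)]
    calc |m * deriv (deriv φ) (x + s * z) + (m * deriv φ (x + s * z)) ^ 2|
        ≤ |m * deriv (deriv φ) (x + s * z)| + |(m * deriv φ (x + s * z)) ^ 2| := abs_add_le _ _
      _ ≤ m * D + (m * C) ^ 2 := add_le_add h1 h2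
  calc Real.exp (m * φ (x + s * z)) * |m * deriv (deriv φ) (x + s * z)
        + (m * deriv φ (x + s * z)) ^ 2|
      ≤ Real.exp (m * φ (x + s * z)) * (m * D + (m * C) ^ 2) :=
        mul_le_mul_of_nonneg_left hfac (Real.exp_pos _).le
    _ = (m * D + (m * C) ^ 2) * Real.exp (m * φ (x + s * z)) := by ring

/-- Cauchy–Schwarz consequence: `gI1 ^ 2 ≤ gI2 * gI` for convex nondecreasing `φ`. -/
lemma gI1_sq_le (hφ : Differentiable ℝ φ) (hφ' : Differentiable ℝ (deriv φ))
    (hC : ∀ x, |deriv φ x| ≤ C) (hD : ∀ x, |deriv (deriv φ) x| ≤ D)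
    (hm : 0 < m) (hs : 0 ≤ s) (hd1 : ∀ x, 0 ≤ deriv φ x) (hd2 : ∀ x, 0 ≤ deriv (deriv φ) x)
    (x : ℝ) :
    gI1 φ m s x ^ 2 ≤ gI2 φ m s x * gI φ m s x := by
  set a : ℝ → ℝ := fun z => Real.exp (m * φ (x + s * z) / 2) * (m * deriv φ (x + s * z)) with ha
  set b : ℝ → ℝ := fun z => Real.exp (m * φ (x + s * z) / 2) with hb
  have hexp2 : ∀ u : ℝ, Real.exp (u / 2) ^ 2 = Real.exp u := fun u => by
    rw [sq, ← Real.exp_add, add_halves]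
  have hab : ∀ z, a z * b z = Real.exp (m * φ (x + s * z)) * (m * deriv φ (x + s * z)) := by
    intro z
    rw [ha, hb]
    dsimp only
    rw [show Real.exp (m * φ (x + s * z) / 2) * (m * deriv φ (x + s * z))
        * Real.exp (m * φ (x + s * z) / 2)
      = Real.exp (m * φ (x + s * z) / 2) ^ 2 * (m * deriv φ (x + s * z)) from by ring, hexp2]
  have ha2 : ∀ z, a z ^ 2 = Real.exp (m * φ (x + s * z)) * (m * deriv φ (x + s * z)) ^ 2 := by
    intro z
    rw [ha]
    dsimp only
    rw [mul_pow, hexp2]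
  have hb2 : ∀ z, b z ^ 2 = Real.exp (m * φ (x + s * z)) := by
    intro z
    rw [hb]
    dsimp only
    rw [hexp2]
  have iab : Integrable (fun z => a z * b z) γ := by
    rw [funext hab]
    exact integrable_gI1_integrand hφ hφ' hC hm hs x
  have ib2 : Integrable (fun z => b z ^ 2) γ := by
    rw [funext hb2]
    exact integrable_exp_integrand hφ hC hm hs x
  have ia2 : Integrable (fun z => a z ^ 2) γ := by
    rw [funext ha2]
    refine Integrable.mono' ((integrable_exp_integrand hφ hC hm hs x).const_mul ((m * C) ^ 2))
      ?_ ?_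
    · exact ((Real.continuous_exp.comp
        (continuous_const.mul (hφ.continuous.comp (cont_inner x)))).mul
        ((continuous_const.mul (hφ'.continuous.comp (cont_inner x))).pow 2)).aestronglyMeasurable
    · filter_upwards with z
      rw [Real.norm_eq_abs, abs_mul, abs_of_nonneg (Real.exp_pos _).le,
        abs_of_nonneg (sq_nonneg _)]
      have h5 := abs_le.1 (hC (x + s * z))
      have h4 : deriv φ (x + s * z) ^ 2 ≤ C ^ 2 := sq_le_sq' h5.1 h5.2
      calc Real.exp (m * φ (x + s * z)) * (m * deriv φ (x + s * z)) ^ 2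
          ≤ Real.exp (m * φ (x + s * z)) * (m * C) ^ 2 := by
            apply mul_le_mul_of_nonneg_left ?_ (Real.exp_pos _).le
            nlinarith [mul_le_mul_of_nonneg_left h4 (sq_nonneg m)]
        _ = (m * C) ^ 2 * Real.exp (m * φ (x + s * z)) := by ring
  have hcs := sq_integral_mul_le iab ia2 ib2 (fun z => (Real.exp_pos _).le)
  have e1 : gI1 φ m s x = ∫ z, a z * b z ∂γ := by rw [gI1, funext hab]
  have e2 : gI φ m s x = ∫ z, b z ^ 2 ∂γ := by rw [gI, funext hb2]
  have e3 : (∫ z, a z ^ 2 ∂γ) ≤ gI2 φ m s x := by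
    rw [gI2, funext ha2]
    apply integral_mono (by rw [← funext ha2]; exact ia2)
      (integrable_gI2_integrand hφ hφ' hC hD hm hs x)
    intro z
    dsimp only
    have h6 : 0 ≤ Real.exp (m * φ (x + s * z)) * (m * deriv (deriv φ) (x + s * z)) :=
      mul_nonneg (Real.exp_pos _).le (mul_nonneg hm.le (hd2 _))
    nlinarith [h6]
  have hGpos : (0:ℝ) < gI φ m s x := gI_pos hφ hC hm hs x
  calc gI1 φ m s x ^ 2 = (∫ z, a z * b z ∂γ) ^ 2 := by rw [e1]
    _ ≤ (∫ z, a z ^ 2 ∂γ) * (∫ z, b z ^ 2 ∂γ) := hcs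
    _ ≤ gI2 φ m s x * gI φ m s x := by
        rw [← e2]
        exact mul_le_mul_of_nonneg_right e3 (e2 ▸ hGpos.le)

end Core4


noncomputable def pF (φ : ℝ → ℝ) (m s : ℝ) : ℝ → ℝ :=
  fun x => (1 / m) * Real.log (gI φ m s x)

section PF

variable {φ : ℝ → ℝ} {m s C D : ℝ}

lemma hasDerivAt_pF (hφ : Differentiable ℝ φ) (hC : ∀ x, |deriv φ x| ≤ C)
    (hm : 0 < m) (hs : 0 ≤ s) (x : ℝ) :
    HasDerivAt (pF φ m s) ((1 / m) * (gI1 φ m s x / gI φ m s x)) x :=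
  ((hasDerivAt_gI hφ hC hm hs x).log (gI_pos hφ hC hm hs x).ne').const_mul (1 / m)

lemma deriv_pF (hφ : Differentiable ℝ φ) (hC : ∀ x, |deriv φ x| ≤ C)
    (hm : 0 < m) (hs : 0 ≤ s) :
    deriv (pF φ m s) = fun x => (1 / m) * (gI1 φ m s x / gI φ m s x) :=
  funext fun x => (hasDerivAt_pF hφ hC hm hs x).deriv

lemma hasDerivAt_deriv_pF (hφ : Differentiable ℝ φ) (hφ' : Differentiable ℝ (deriv φ))
    (hC : ∀ x, |deriv φ x| ≤ C) (hD : ∀ x, |deriv (deriv φ) x| ≤ D)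
    (hm : 0 < m) (hs : 0 ≤ s) (x : ℝ) :
    HasDerivAt (fun y => (1 / m) * (gI1 φ m s y / gI φ m s y))
      ((1 / m) * ((gI2 φ m s x * gI φ m s x - gI1 φ m s x * gI1 φ m s x) / gI φ m s x ^ 2)) x :=
  (((hasDerivAt_gI1 hφ hφ' hC hD hm hs x).div (hasDerivAt_gI hφ hC hm hs x)
    (gI_pos hφ hC hm hs x).ne')).const_mul (1 / m)

lemma deriv_deriv_pF (hφ : Differentiable ℝ φ) (hφ' : Differentiable ℝ (deriv φ))
    (hC : ∀ x, |deriv φ x| ≤ C) (hD : ∀ x, |deriv (deriv φ) x| ≤ D)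
    (hm : 0 < m) (hs : 0 ≤ s) (x : ℝ) :
    deriv (deriv (pF φ m s)) x
      = (1 / m) * ((gI2 φ m s x * gI φ m s x - gI1 φ m s x * gI1 φ m s x) / gI φ m s x ^ 2) := by
  rw [deriv_pF hφ hC hm hs]
  exact (hasDerivAt_deriv_pF hφ hφ' hC hD hm hs x).deriv

lemma abs_deriv_pF_le (hφ : Differentiable ℝ φ) (hφ' : Differentiable ℝ (deriv φ))
    (hC : ∀ x, |deriv φ x| ≤ C) (hm : 0 < m) (hs : 0 ≤ s) (x : ℝ) :
    |deriv (pF φ m s) x| ≤ C := by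
  rw [deriv_pF hφ hC hm hs]
  have hG := gI_pos hφ hC hm hs x
  have h1 := abs_gI1_le hφ hφ' hC hm hs x
  dsimp only
  have e : |1 / m * (gI1 φ m s x / gI φ m s x)| = 1 / m * (|gI1 φ m s x| / gI φ m s x) := by
    rw [abs_mul, abs_of_pos (show (0:ℝ) < 1 / m by positivity), abs_div, abs_of_pos hG]
  rw [e]
  have h2 : 1 / m * (|gI1 φ m s x| / gI φ m s x)
      ≤ 1 / m * (m * C * gI φ m s x / gI φ m s x) :=
    mul_le_mul_of_nonneg_left ((div_le_div_iff_of_pos_right hG).2 h1) (by positivity)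
  refine h2.trans ?_
  rw [mul_div_assoc, div_self hG.ne', mul_one]
  field_simp
  exact le_rfl

lemma abs_deriv_deriv_pF_le (hφ : Differentiable ℝ φ) (hφ' : Differentiable ℝ (deriv φ))
    (hC : ∀ x, |deriv φ x| ≤ C) (hD : ∀ x, |deriv (deriv φ) x| ≤ D)
    (hm : 0 < m) (hs : 0 ≤ s) (x : ℝ) :
    |deriv (deriv (pF φ m s)) x| ≤ D + 2 * m * C ^ 2 := by
  rw [deriv_deriv_pF hφ hφ' hC hD hm hs x]
  have hG := gI_pos hφ hC hm hs x
  have h1 := abs_gI1_le hφ hφ' hC hm hs x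
  have h2 := abs_gI2_le hφ hφ' hC hD hm hs x
  have hnum : |gI2 φ m s x * gI φ m s x - gI1 φ m s x * gI1 φ m s x|
      ≤ (m * D + 2 * (m * C) ^ 2) * gI φ m s x ^ 2 := by
    have ha : |gI2 φ m s x * gI φ m s x| ≤ (m * D + (m * C) ^ 2) * gI φ m s x ^ 2 := by
      rw [abs_mul, abs_of_pos hG]
      nlinarith [h2, hG]
    have hb : |gI1 φ m s x * gI1 φ m s x| ≤ (m * C) ^ 2 * gI φ m s x ^ 2 := by
      rw [abs_mul]
      have hC0 : 0 ≤ C := C_nonneg hC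
      nlinarith [abs_nonneg (gI1 φ m s x), h1, hG, mul_le_mul h1 h1 (abs_nonneg _)
        (mul_nonneg (mul_nonneg hm.le hC0) hG.le)]
    calc |gI2 φ m s x * gI φ m s x - gI1 φ m s x * gI1 φ m s x|
        ≤ |gI2 φ m s x * gI φ m s x| + |gI1 φ m s x * gI1 φ m s x| := abs_sub _ _
      _ ≤ (m * D + 2 * (m * C) ^ 2) * gI φ m s x ^ 2 := by nlinarith [ha, hb]
  have e : |1 / m * ((gI2 φ m s x * gI φ m s x - gI1 φ m s x * gI1 φ m s x) / gI φ m s x ^ 2)|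
      = 1 / m * (|gI2 φ m s x * gI φ m s x - gI1 φ m s x * gI1 φ m s x| / gI φ m s x ^ 2) := by
    rw [abs_mul, abs_of_pos (show (0:ℝ) < 1 / m by positivity), abs_div,
      abs_of_pos (by positivity : (0:ℝ) < gI φ m s x ^ 2)]
  rw [e]
  have h3 : 1 / m * (|gI2 φ m s x * gI φ m s x - gI1 φ m s x * gI1 φ m s x| / gI φ m s x ^ 2)
      ≤ 1 / m * ((m * D + 2 * (m * C) ^ 2) * gI φ m s x ^ 2 / gI φ m s x ^ 2) :=
    mul_le_mul_of_nonneg_left ((div_le_div_iff_of_pos_right (by positivity)).2 hnum) (by positivity)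
  refine h3.trans ?_
  rw [mul_div_assoc, div_self (by positivity : (gI φ m s x ^ 2) ≠ 0), mul_one]
  apply le_of_eq
  field_simp

lemma deriv_pF_nonneg (hφ : Differentiable ℝ φ) (hC : ∀ x, |deriv φ x| ≤ C)
    (hm : 0 < m) (hs : 0 ≤ s) (hd : ∀ x, 0 ≤ deriv φ x) (x : ℝ) :
    0 ≤ deriv (pF φ m s) x := by
  rw [deriv_pF hφ hC hm hs]
  have hG := gI_pos hφ hC hm hs x
  have h1 : 0 ≤ gI1 φ m s x := gI1_nonneg hm hd x
  positivity

lemma monotone_pF (hφ : Differentiable ℝ φ) (hC : ∀ x, |deriv φ x| ≤ C)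
    (hm : 0 < m) (hs : 0 ≤ s) (hd : ∀ x, 0 ≤ deriv φ x) :
    Monotone (pF φ m s) :=
  monotone_of_deriv_nonneg (fun x => (hasDerivAt_pF hφ hC hm hs x).differentiableAt)
    (deriv_pF_nonneg hφ hC hm hs hd)

lemma convexOn_pF (hφ : Differentiable ℝ φ) (hφ' : Differentiable ℝ (deriv φ))
    (hC : ∀ x, |deriv φ x| ≤ C) (hD : ∀ x, |deriv (deriv φ) x| ≤ D)
    (hm : 0 < m) (hs : 0 ≤ s) (hd1 : ∀ x, 0 ≤ deriv φ x) (hd2 : ∀ x, 0 ≤ deriv (deriv φ) x) :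
    ConvexOn ℝ Set.univ (pF φ m s) := by
  refine convexOn_univ_of_deriv2_nonneg
    (fun x => (hasDerivAt_pF hφ hC hm hs x).differentiableAt)
    (by rw [deriv_pF hφ hC hm hs]
        exact fun x => (hasDerivAt_deriv_pF hφ hφ' hC hD hm hs x).differentiableAt) ?_
  intro x
  have h : deriv^[2] (pF φ m s) x = deriv (deriv (pF φ m s)) x := by
    simp [Function.iterate_succ, Function.iterate_one]
  rw [h, deriv_deriv_pF hφ hφ' hC hD hm hs x]
  have hG := gI_pos hφ hC hm hs x
  have hq := gI1_sq_le hφ hφ' hC hD hm hs hd1 hd2 x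
  have hnum : 0 ≤ gI2 φ m s x * gI φ m s x - gI1 φ m s x * gI1 φ m s x := by nlinarith [hq]
  positivity

lemma tdb_pF (hφ : Differentiable ℝ φ) (hφ' : Differentiable ℝ (deriv φ))
    (hC : ∀ x, |deriv φ x| ≤ C) (hD : ∀ x, |deriv (deriv φ) x| ≤ D)
    (hm : 0 < m) (hs : 0 ≤ s) :
    TwiceDiffBounded (pF φ m s) := by
  refine ⟨fun x => (hasDerivAt_pF hφ hC hm hs x).differentiableAt, ?_, ⟨C, fun x =>
    abs_deriv_pF_le hφ hφ' hC hm hs x⟩, ⟨D + 2 * m * C ^ 2, fun x =>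
    abs_deriv_deriv_pF_le hφ hφ' hC hD hm hs x⟩⟩
  rw [deriv_pF hφ hC hm hs]
  exact fun x => (hasDerivAt_deriv_pF hφ hφ' hC hD hm hs x).differentiableAt

end PF

section Compare

variable {φ1 φ2 : ℝ → ℝ} {m1 m2 s C1 C2 : ℝ}

/-- Monotonicity of `(1/m) log ∫ exp (m ψ)` in `m` (via Jensen) and in `ψ`. -/
lemma pF_le_pF (hφ1 : Differentiable ℝ φ1) (hφ2 : Differentiable ℝ φ2)
    (hC1 : ∀ x, |deriv φ1 x| ≤ C1) (hC2 : ∀ x, |deriv φ2 x| ≤ C2)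
    (hm1 : 0 < m1) (hm12 : m1 ≤ m2) (hs : 0 ≤ s) (h12 : ∀ x, φ1 x ≤ φ2 x) (x : ℝ) :
    pF φ1 m1 s x ≤ pF φ2 m2 s x := by
  have hm2 : 0 < m2 := hm1.trans_le hm12
  have hG1 : 0 < gI φ1 m1 s x := gI_pos hφ1 hC1 hm1 hs x
  have hG21 : 0 < gI φ2 m1 s x := gI_pos hφ2 hC2 hm1 hs x
  have hG22 : 0 < gI φ2 m2 s x := gI_pos hφ2 hC2 hm2 hs x
  -- Step A : gI φ1 m1 ≤ gI φ2 m1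
  have hA : gI φ1 m1 s x ≤ gI φ2 m1 s x := by
    apply integral_mono (integrable_exp_integrand hφ1 hC1 hm1 hs x)
      (integrable_exp_integrand hφ2 hC2 hm1 hs x)
    intro z
    exact Real.exp_le_exp.2 (mul_le_mul_of_nonneg_left (h12 _) hm1.le)
  -- Step B : (1/m1) log gI φ2 m1 ≤ (1/m2) log gI φ2 m2 via Jensen
  set r : ℝ := m1 / m2 with hr
  have hr0 : 0 < r := div_pos hm1 hm2
  have hr1 : r ≤ 1 := (div_le_one hm2).2 hm12
  have hcomp : (fun z => (fun y : ℝ => y ^ r) ((fun z => Real.exp (m2 * φ2 (x + s * z))) z))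
      = fun z => Real.exp (m1 * φ2 (x + s * z)) := by
    funext z
    dsimp only
    rw [← Real.exp_mul]
    congr 1
    rw [hr]
    field_simp
  have hjen := (Real.concaveOn_rpow hr0.le hr1).le_map_integral (μ := γ)
    (f := fun z => Real.exp (m2 * φ2 (x + s * z)))
    (fun y hy => (Real.continuousAt_rpow_const y r (Or.inr hr0.le)).continuousWithinAt)
    isClosed_Ici
    (Filter.Eventually.of_forall fun z => (Real.exp_pos _).le)
    (integrable_exp_integrand hφ2 hC2 hm2 hs x)
    (by rw [show ((fun y : ℝ => y ^ r) ∘ fun z => Real.exp (m2 * φ2 (x + s * z)))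
          = fun z => Real.exp (m1 * φ2 (x + s * z)) from hcomp]
        exact integrable_exp_integrand hφ2 hC2 hm1 hs x)
  rw [show (fun z => (fun y : ℝ => y ^ r) ((fun z => Real.exp (m2 * φ2 (x + s * z))) z))
      = fun z => Real.exp (m1 * φ2 (x + s * z)) from hcomp] at hjen
  -- hjen : gI φ2 m1 s x ≤ (gI φ2 m2 s x) ^ r
  have hB : (1 / m1) * Real.log (gI φ2 m1 s x) ≤ (1 / m2) * Real.log (gI φ2 m2 s x) := by
    have hlog : Real.log (gI φ2 m1 s x) ≤ r * Real.log (gI φ2 m2 s x) := by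
      rw [← Real.log_rpow hG22]
      exact Real.log_le_log hG21 hjen
    calc (1 / m1) * Real.log (gI φ2 m1 s x) ≤ (1 / m1) * (r * Real.log (gI φ2 m2 s x)) :=
          mul_le_mul_of_nonneg_left hlog (by positivity)
      _ = (1 / m2) * Real.log (gI φ2 m2 s x) := by
          rw [hr]
          field_simp
  calc pF φ1 m1 s x = (1 / m1) * Real.log (gI φ1 m1 s x) := rfl
    _ ≤ (1 / m1) * Real.log (gI φ2 m1 s x) :=
        mul_le_mul_of_nonneg_left (Real.log_le_log hG1 hA) (by positivity)
    _ ≤ (1 / m2) * Real.log (gI φ2 m2 s x) := hB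
    _ = pF φ2 m2 s x := rfl

end Compare


section Compare2

variable {φ1 φ2 : ℝ → ℝ} {m1 m2 s C1 C2 : ℝ}

lemma deriv_pF_le (hφ1 : Differentiable ℝ φ1) (hφ1' : Differentiable ℝ (deriv φ1))
    (hC1 : ∀ x, |deriv φ1 x| ≤ C1)
    (hφ2 : Differentiable ℝ φ2) (hφ2' : Differentiable ℝ (deriv φ2))
    (hC2 : ∀ x, |deriv φ2 x| ≤ C2)
    (hm1 : 0 < m1) (hm12 : m1 ≤ m2) (hs : 0 ≤ s)
    (hmono2 : Monotone φ2) (hmono2' : Monotone (deriv φ2))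
    (hd12 : ∀ x, deriv φ1 x ≤ deriv φ2 x) (x : ℝ) :
    deriv (pF φ1 m1 s) x ≤ deriv (pF φ2 m2 s) x := by
  have hm2 : 0 < m2 := hm1.trans_le hm12
  have hG1 : 0 < gI φ1 m1 s x := gI_pos hφ1 hC1 hm1 hs x
  have hG2 : 0 < gI φ2 m2 s x := gI_pos hφ2 hC2 hm2 hs x
  rw [deriv_pF hφ1 hC1 hm1 hs, deriv_pF hφ2 hC2 hm2 hs]
  dsimp only
  -- rewrite gI1 in terms of plain integrals
  have e1 : gI1 φ1 m1 s x
      = m1 * ∫ z, deriv φ1 (x + s * z) * Real.exp (m1 * φ1 (x + s * z)) ∂γ := by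
    rw [gI1, ← integral_const_mul]
    exact integral_congr_ae (Filter.Eventually.of_forall fun z => by ring)
  have e2 : gI1 φ2 m2 s x
      = m2 * ∫ z, deriv φ2 (x + s * z) * Real.exp (m2 * φ2 (x + s * z)) ∂γ := by
    rw [gI1, ← integral_const_mul]
    exact integral_congr_ae (Filter.Eventually.of_forall fun z => by ring)
  set I1 : ℝ := ∫ z, deriv φ1 (x + s * z) * Real.exp (m1 * φ1 (x + s * z)) ∂γ with hI1
  set J1 : ℝ := ∫ z, deriv φ2 (x + s * z) * Real.exp (m1 * φ1 (x + s * z)) ∂γ with hJ1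
  set J2 : ℝ := ∫ z, deriv φ2 (x + s * z) * Real.exp (m2 * φ2 (x + s * z)) ∂γ with hJ2
  have hq1 : 1 / m1 * (gI1 φ1 m1 s x / gI φ1 m1 s x) = I1 / gI φ1 m1 s x := by
    rw [e1]
    field_simp
  have hq2 : 1 / m2 * (gI1 φ2 m2 s x / gI φ2 m2 s x) = J2 / gI φ2 m2 s x := by
    rw [e2]
    field_simp
  rw [hq1, hq2]
  -- integrability facts
  have hfmeas : AEStronglyMeasurable (fun z : ℝ => deriv φ2 (x + s * z)) γ :=
    (hφ2'.continuous.comp (cont_inner x)).aestronglyMeasurable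
  have hfbdd : ∃ c, ∀ z : ℝ, ‖deriv φ2 (x + s * z)‖ ≤ c :=
    ⟨C2, fun z => by rw [Real.norm_eq_abs]; exact hC2 _⟩
  have hw1 : Integrable (fun z => Real.exp (m1 * φ1 (x + s * z))) γ :=
    integrable_exp_integrand hφ1 hC1 hm1 hs x
  have hw2 : Integrable (fun z => Real.exp (m2 * φ2 (x + s * z))) γ :=
    integrable_exp_integrand hφ2 hC2 hm2 hs x
  have hfw1 : Integrable (fun z => deriv φ2 (x + s * z) * Real.exp (m1 * φ1 (x + s * z))) γ :=
    hw1.bdd_mul hfmeas (Filter.Eventually.of_forall hfbdd.choose_spec)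
  have hfw2 : Integrable (fun z => deriv φ2 (x + s * z) * Real.exp (m2 * φ2 (x + s * z))) γ :=
    hw2.bdd_mul hfmeas (Filter.Eventually.of_forall hfbdd.choose_spec)
  have hi1w1 : Integrable (fun z => deriv φ1 (x + s * z) * Real.exp (m1 * φ1 (x + s * z))) γ :=
    hw1.bdd_mul ((hφ1'.continuous.comp (cont_inner x)).aestronglyMeasurable)
      (Filter.Eventually.of_forall (fun z => by rw [Real.norm_eq_abs]; exact hC1 _ : ∀ z : ℝ, ‖deriv φ1 (x + s * z)‖ ≤ C1))
  -- step 1 : I1 ≤ J1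
  have hIJ : I1 ≤ J1 := by
    apply integral_mono hi1w1 hfw1
    intro z
    exact mul_le_mul_of_nonneg_right (hd12 _) (Real.exp_pos _).le
  -- step 2 : correlation inequality J1 * G2 ≤ J2 * G1
  have hsub : Monotone (fun y => φ2 y - φ1 y) := by
    apply monotone_of_deriv_nonneg (hφ2.sub hφ1)
    intro y
    rw [deriv_sub (hφ2 y) (hφ1 y)]
    linarith [hd12 y]
  have hcorr : J1 * gI φ2 m2 s x ≤ J2 * gI φ1 m1 s x := by
    apply correlation_le hfw1 hfw2 hw1 hw2
    · intro a b hab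
      exact hmono2' (by nlinarith [mul_le_mul_of_nonneg_left hab hs] : x + s * a ≤ x + s * b)
    · intro a b hab
      have hAB : x + s * a ≤ x + s * b := by nlinarith [mul_le_mul_of_nonneg_left hab hs]
      rw [← Real.exp_add, ← Real.exp_add]
      apply Real.exp_le_exp.2
      have hD2 : φ2 (x + s * a) ≤ φ2 (x + s * b) := hmono2 hAB
      have hD12 : φ2 (x + s * a) - φ1 (x + s * a) ≤ φ2 (x + s * b) - φ1 (x + s * b) := hsub hAB
      nlinarith [mul_le_mul_of_nonneg_left
          (show φ1 (x + s * b) - φ1 (x + s * a) ≤ φ2 (x + s * b) - φ2 (x + s * a) by linarith)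
          hm1.le,
        mul_le_mul_of_nonneg_right hm12 (show 0 ≤ φ2 (x + s * b) - φ2 (x + s * a) by linarith)]
  rw [div_le_div_iff₀ hG1 hG2]
  calc I1 * gI φ2 m2 s x ≤ J1 * gI φ2 m2 s x := mul_le_mul_of_nonneg_right hIJ hG2.le
    _ ≤ J2 * gI φ1 m1 s x := hcorr

end Compare2


end ParisiAux

theorem parisi_preserves_nondec_pair (φ1 φ2 : ℝ → ℝ) (h : AdmissibleNondecPair φ1 φ2)
    (m1 m2 : ℝ) (hm1 : 0 < m1) (hm12 : m1 ≤ m2) :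
    ∀ t ∈ Set.Icc (0 : ℝ) 1,
      AdmissibleNondecPair (fun x => parisiF φ1 m1 x t) (fun x => parisiF φ2 m2 x t) := by
  intro t ht
  obtain ⟨⟨hφ1d, hφ1d', ⟨C1, hC1⟩, ⟨D1, hD1⟩⟩, ⟨hφ2d, hφ2d', ⟨C2, hC2⟩, ⟨D2, hD2⟩⟩,
    hmono1, hmono2, hconv1, hconv2, h12, hd12⟩ := h
  have hm2 : 0 < m2 := hm1.trans_le hm12
  have hs : 0 ≤ Real.sqrt t := Real.sqrt_nonneg t
  have key1 : (fun x => parisiF φ1 m1 x t) = ParisiAux.pF φ1 m1 (Real.sqrt t) := rfl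
  have key2 : (fun x => parisiF φ2 m2 x t) = ParisiAux.pF φ2 m2 (Real.sqrt t) := rfl
  have hd1nn : ∀ y, 0 ≤ deriv φ1 y := fun y =>
    ParisiAux.deriv_nonneg_of_monotone hmono1 (hφ1d y)
  have hd2nn : ∀ y, 0 ≤ deriv φ2 y := fun y =>
    ParisiAux.deriv_nonneg_of_monotone hmono2 (hφ2d y)
  have hmono1' : Monotone (deriv φ1) :=
    monotoneOn_univ.1 (hconv1.monotoneOn_deriv fun y _ => hφ1d y)
  have hmono2' : Monotone (deriv φ2) :=
    monotoneOn_univ.1 (hconv2.monotoneOn_deriv fun y _ => hφ2d y)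
  have hdd1nn : ∀ y, 0 ≤ deriv (deriv φ1) y := fun y =>
    ParisiAux.deriv_nonneg_of_monotone hmono1' (hφ1d' y)
  have hdd2nn : ∀ y, 0 ≤ deriv (deriv φ2) y := fun y =>
    ParisiAux.deriv_nonneg_of_monotone hmono2' (hφ2d' y)
  rw [key1, key2]
  exact ⟨ParisiAux.tdb_pF hφ1d hφ1d' hC1 hD1 hm1 hs,
    ParisiAux.tdb_pF hφ2d hφ2d' hC2 hD2 hm2 hs,
    ParisiAux.monotone_pF hφ1d hC1 hm1 hs hd1nn,
    ParisiAux.monotone_pF hφ2d hC2 hm2 hs hd2nn,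
    ParisiAux.convexOn_pF hφ1d hφ1d' hC1 hD1 hm1 hs hd1nn hdd1nn,
    ParisiAux.convexOn_pF hφ2d hφ2d' hC2 hD2 hm2 hs hd2nn hdd2nn,
    fun x => ParisiAux.pF_le_pF hφ1d hφ2d hC1 hC2 hm1 hm12 hs h12 x,
    fun x => ParisiAux.deriv_pF_le hφ1d hφ1d' hC1 hφ2d hφ2d' hC2 hm1 hm12 hs
      hmono2 hmono2' hd12 x⟩
end

section
/- Let g be a centered Gaussian random variable with variance σ² > 0 and let f1, f2 : ℝ → ℝ be measurable odd functions such that E|f1(x + g)| < ∞ and E|f2(x + g)| < ∞ for every x ∈ ℝ. If f1(u) ≤ f2(u) for all u ≥ 0, then E[f1(x + g)] ≤ E[f2(x + g)] for all x ≥ 0. -/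
open MeasureTheory ProbabilityTheory Set Real

lemma gauss_integral_eq' (σ2 : NNReal) (hσ : σ2 ≠ 0) (F : ℝ → ℝ) :
    ∫ u, F u ∂(gaussianReal 0 σ2) = ∫ u, gaussianPDFReal 0 σ2 u * F u := by
  rw [gaussianReal_of_var_ne_zero _ hσ]
  have h1 : gaussianPDF 0 σ2
      = fun u => ((gaussianPDFReal 0 σ2 u).toNNReal : ENNReal) := by
    funext u; rfl
  rw [h1, integral_withDensity_eq_integral_smul
    ((measurable_gaussianPDFReal 0 σ2).real_toNNReal) F]
  congr 1; funext u
  simp [NNReal.smul_def, Real.coe_toNNReal _ (gaussianPDFReal_nonneg 0 σ2 u)]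

lemma gaussianPDFReal_neg' (σ2 : NNReal) (y : ℝ) :
    gaussianPDFReal 0 σ2 (-y) = gaussianPDFReal 0 σ2 y := by
  simp [gaussianPDFReal, neg_sq]

lemma gaussianPDFReal_anti (σ2 : NNReal) {a b : ℝ} (h : a ^ 2 ≤ b ^ 2) :
    gaussianPDFReal 0 σ2 b ≤ gaussianPDFReal 0 σ2 a := by
  unfold gaussianPDFReal
  apply mul_le_mul_of_nonneg_left _ (inv_nonneg.mpr (Real.sqrt_nonneg _))
  apply Real.exp_le_exp.mpr
  simp only [sub_zero, neg_div]
  apply neg_le_neg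
  rcases eq_or_ne σ2 0 with h0 | h0
  · simp [h0]
  · have h2 : (0:ℝ) < (σ2:ℝ) := by positivity
    gcongr

lemma key_nonneg (σ2 : NNReal) (hσ : σ2 ≠ 0) (g : ℝ → ℝ) (hg : Measurable g)
    (hodd : ∀ u, g (-u) = -g u)
    (hint : ∀ y : ℝ, Integrable (fun u => g (y + u)) (gaussianReal 0 σ2))
    (hpos : ∀ u, 0 ≤ u → 0 ≤ g u) (x : ℝ) (hx : 0 ≤ x) :
    0 ≤ ∫ u, g (x + u) ∂(gaussianReal 0 σ2) := by
  set φ := gaussianPDFReal 0 σ2 with hφ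
  have hφm : Measurable φ := measurable_gaussianPDFReal 0 σ2
  -- integrability over volume
  have hintvol : ∀ y : ℝ, Integrable (fun u => φ u * g (y + u)) volume := by
    intro y
    have := hint y
    rw [gaussianReal_of_var_ne_zero _ hσ] at this
    have h1 : gaussianPDF 0 σ2
        = fun u => ((φ u).toNNReal : ENNReal) := by funext u; rfl
    rw [h1, integrable_withDensity_iff_integrable_smul
      (hφm.real_toNNReal)] at this
    simpa [NNReal.smul_def, Real.coe_toNNReal _ (gaussianPDFReal_nonneg 0 σ2 _), hφ,
      fun u => max_eq_left (gaussianPDFReal_nonneg 0 σ2 u)]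
      using this
  rw [gauss_integral_eq' σ2 hσ]
  -- translate
  have htrans : ∫ u, φ u * g (x + u) = ∫ v, φ (v - x) * g v := by
    rw [← integral_add_right_eq_self (fun v => φ (v - x) * g v) x]
    congr 1; funext u; rw [add_sub_cancel_right, add_comm]
  rw [htrans]
  have hI1 : Integrable (fun v => φ (v - x) * g v) volume := by
    have := (hintvol x).comp_sub_right x
    simpa [add_sub_cancel] using this
  have hI2 : Integrable (fun v => φ (v + x) * g v) volume := by
    have := (hintvol (-x)).comp_add_right x
    simpa [neg_add_cancel_left] using this
  -- split and fold negative part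
  rw [← intervalIntegral.integral_Iic_add_Ioi (b := 0) hI1.integrableOn hI1.integrableOn]
  have hneg : ∫ v in Iic (0:ℝ), φ (v - x) * g v
      = - ∫ v in Ioi (0:ℝ), φ (v + x) * g v := by
    rw [show (Iic (0:ℝ)) = Iic (-(0:ℝ)) by norm_num,
      ← integral_comp_neg_Ioi (0:ℝ) (fun v => φ (v - x) * g v)]
    rw [← integral_neg]
    congr 1; funext v
    rw [hodd]
    have : -v - x = -(v + x) := by ring
    rw [this, hφ, gaussianPDFReal_neg']
    ring
  rw [hneg]
  have hdiff : (- ∫ v in Ioi (0:ℝ), φ (v + x) * g v)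
        + (∫ v in Ioi (0:ℝ), φ (v - x) * g v)
      = ∫ v in Ioi (0:ℝ), (φ (v - x) - φ (v + x)) * g v := by
    rw [neg_add_eq_sub, ← integral_sub hI1.integrableOn hI2.integrableOn]
    congr 1; funext v; ring
  rw [hdiff]
  apply setIntegral_nonneg measurableSet_Ioi
  intro v hv
  have hv' : (0:ℝ) ≤ v := le_of_lt hv
  apply mul_nonneg _ (hpos v hv')
  rw [sub_nonneg, hφ]
  apply gaussianPDFReal_anti
  nlinarith

theorem odd_gaussian_expectation_mono (σ2 : NNReal) (hσ : 0 < σ2)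
    (f1 f2 : ℝ → ℝ) (hf1 : Measurable f1) (hf2 : Measurable f2)
    (hodd1 : ∀ u, f1 (-u) = -f1 u) (hodd2 : ∀ u, f2 (-u) = -f2 u)
    (hint1 : ∀ x : ℝ, Integrable (fun u => f1 (x + u)) (gaussianReal 0 σ2))
    (hint2 : ∀ x : ℝ, Integrable (fun u => f2 (x + u)) (gaussianReal 0 σ2))
    (hle : ∀ u : ℝ, 0 ≤ u → f1 u ≤ f2 u) :
    ∀ x : ℝ, 0 ≤ x →
      ∫ u, f1 (x + u) ∂(gaussianReal 0 σ2) ≤ ∫ u, f2 (x + u) ∂(gaussianReal 0 σ2) := by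
  intro x hx
  have key := key_nonneg σ2 hσ.ne' (fun u => f2 u - f1 u) (hf2.sub hf1)
    (fun u => by show f2 (-u) - f1 (-u) = -(f2 u - f1 u); rw [hodd1, hodd2]; ring)
    (fun y => (hint2 y).sub (hint1 y))
    (fun u hu => sub_nonneg.mpr (hle u hu)) x hx
  rw [← sub_nonneg, ← integral_sub (hint2 x) (hint1 x)]
  exact key
end

section
/- Let g be a centered Gaussian random variable with variance σ² > 0, let W : ℝ² → [0,∞) be measurable with E[W(x, x + g)] = 1 for every x ∈ ℝ, and let f1, f2 : ℝ → ℝ be nondecreasing measurable functions such that f1(x+g)·f2(x+g)·W(x,x+g), f1(x+g)·W(x,x+g) and f2(x+g)·W(x,x+g) are integrable for every x. Then for every x ∈ ℝ, E[f1(x+g)·f2(x+g)·W(x, x+g)] ≥ E[f1(x+g)·W(x, x+g)] · E[f2(x+g)·W(x, x+g)]. -/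
open MeasureTheory ProbabilityTheory Set

theorem fkg_gaussian_tilted (σ2 : NNReal) (hσ : 0 < σ2)
    (W : ℝ → ℝ → ℝ) (hWmeas : Measurable (Function.uncurry W))
    (hWnonneg : ∀ x y, 0 ≤ W x y)
    (hWnorm : ∀ x : ℝ, ∫ u, W x (x + u) ∂(gaussianReal 0 σ2) = 1)
    (f1 f2 : ℝ → ℝ) (hf1meas : Measurable f1) (hf2meas : Measurable f2)
    (hf1mono : Monotone f1) (hf2mono : Monotone f2)
    (hint12 : ∀ x : ℝ,
      Integrable (fun u => f1 (x + u) * f2 (x + u) * W x (x + u)) (gaussianReal 0 σ2))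
    (hint1 : ∀ x : ℝ, Integrable (fun u => f1 (x + u) * W x (x + u)) (gaussianReal 0 σ2))
    (hint2 : ∀ x : ℝ, Integrable (fun u => f2 (x + u) * W x (x + u)) (gaussianReal 0 σ2)) :
    ∀ x : ℝ,
      (∫ u, f1 (x + u) * W x (x + u) ∂(gaussianReal 0 σ2)) *
          (∫ u, f2 (x + u) * W x (x + u) ∂(gaussianReal 0 σ2))
        ≤ ∫ u, f1 (x + u) * f2 (x + u) * W x (x + u) ∂(gaussianReal 0 σ2) := by
  intro x
  set μ := gaussianReal 0 σ2 with hμ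
  set w : ℝ → ℝ := fun u => W x (x + u) with hwdef
  set g1 : ℝ → ℝ := fun u => f1 (x + u) with hg1def
  set g2 : ℝ → ℝ := fun u => f2 (x + u) with hg2def
  have hwint : Integrable w μ := by
    by_contra h
    have := hWnorm x
    rw [show (∫ u, W x (x + u) ∂μ) = ∫ u, w u ∂μ from rfl, integral_undef h] at this
    exact one_ne_zero this.symm
  have hg1mono : Monotone g1 := fun a b hab => hf1mono (by linarith)
  have hg2mono : Monotone g2 := fun a b hab => hf2mono (by linarith)
  have hwnonneg : ∀ u, 0 ≤ w u := fun u => hWnonneg x (x + u)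
  -- the four integrable terms on the product space
  have hA : Integrable (fun p : ℝ × ℝ => (g1 p.1 * g2 p.1 * w p.1) * w p.2) (μ.prod μ) :=
    (hint12 x).mul_prod hwint
  have hA' : Integrable (fun p : ℝ × ℝ => w p.1 * (g1 p.2 * g2 p.2 * w p.2)) (μ.prod μ) :=
    hwint.mul_prod (hint12 x)
  have hB : Integrable (fun p : ℝ × ℝ => (g1 p.1 * w p.1) * (g2 p.2 * w p.2)) (μ.prod μ) :=
    (hint1 x).mul_prod (hint2 x)
  have hB' : Integrable (fun p : ℝ × ℝ => (g2 p.1 * w p.1) * (g1 p.2 * w p.2)) (μ.prod μ) :=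
    (hint2 x).mul_prod (hint1 x)
  have key : 0 ≤ ∫ p : ℝ × ℝ,
      ((g1 p.1 - g1 p.2) * (g2 p.1 - g2 p.2) * (w p.1 * w p.2)) ∂(μ.prod μ) := by
    apply integral_nonneg
    intro p
    apply mul_nonneg _ (mul_nonneg (hwnonneg p.1) (hwnonneg p.2))
    rcases le_total p.1 p.2 with h | h
    · nlinarith [sub_nonpos.2 (hg1mono h), sub_nonpos.2 (hg2mono h)]
    · exact mul_nonneg (sub_nonneg.2 (hg1mono h)) (sub_nonneg.2 (hg2mono h))
  have expand : (fun p : ℝ × ℝ =>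
      (g1 p.1 - g1 p.2) * (g2 p.1 - g2 p.2) * (w p.1 * w p.2))
      = fun p : ℝ × ℝ => ((g1 p.1 * g2 p.1 * w p.1) * w p.2
          + w p.1 * (g1 p.2 * g2 p.2 * w p.2))
          - (g1 p.1 * w p.1) * (g2 p.2 * w p.2)
          - (g2 p.1 * w p.1) * (g1 p.2 * w p.2) := by
    funext p; ring
  have hAA' : Integrable (fun p : ℝ × ℝ => (g1 p.1 * g2 p.1 * w p.1) * w p.2
      + w p.1 * (g1 p.2 * g2 p.2 * w p.2)) (μ.prod μ) := hA.add hA'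
  have hAAB : Integrable (fun p : ℝ × ℝ => (g1 p.1 * g2 p.1 * w p.1) * w p.2
      + w p.1 * (g1 p.2 * g2 p.2 * w p.2)
      - (g1 p.1 * w p.1) * (g2 p.2 * w p.2)) (μ.prod μ) := hAA'.sub hB
  rw [expand] at key
  rw [integral_sub hAAB hB'] at key
  rw [integral_sub hAA' hB] at key
  rw [integral_add hA hA'] at key
  have eA : (∫ p : ℝ × ℝ, (g1 p.1 * g2 p.1 * w p.1) * w p.2 ∂(μ.prod μ))
      = (∫ u, g1 u * g2 u * w u ∂μ) * ∫ u, w u ∂μ :=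
    integral_prod_mul (fun u => g1 u * g2 u * w u) w
  have eA' : (∫ p : ℝ × ℝ, w p.1 * (g1 p.2 * g2 p.2 * w p.2) ∂(μ.prod μ))
      = (∫ u, w u ∂μ) * ∫ u, g1 u * g2 u * w u ∂μ :=
    integral_prod_mul w (fun u => g1 u * g2 u * w u)
  have eB : (∫ p : ℝ × ℝ, (g1 p.1 * w p.1) * (g2 p.2 * w p.2) ∂(μ.prod μ))
      = (∫ u, g1 u * w u ∂μ) * ∫ u, g2 u * w u ∂μ :=
    integral_prod_mul (fun u => g1 u * w u) (fun u => g2 u * w u)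
  have eB' : (∫ p : ℝ × ℝ, (g2 p.1 * w p.1) * (g1 p.2 * w p.2) ∂(μ.prod μ))
      = (∫ u, g2 u * w u ∂μ) * ∫ u, g1 u * w u ∂μ :=
    integral_prod_mul (fun u => g2 u * w u) (fun u => g1 u * w u)
  rw [eA, eA', eB, eB'] at key
  have h1 : (∫ u, w u ∂μ) = 1 := hWnorm x
  rw [h1] at key
  have : (∫ u, f1 (x + u) * W x (x + u) ∂μ) = ∫ u, g1 u * w u ∂μ := rfl
  rw [this]
  have : (∫ u, f2 (x + u) * W x (x + u) ∂μ) = ∫ u, g2 u * w u ∂μ := rfl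
  rw [this]
  have : (∫ u, f1 (x + u) * f2 (x + u) * W x (x + u) ∂μ) = ∫ u, g1 u * g2 u * w u ∂μ := rfl
  rw [this]
  nlinarith [key]
end

section
/- Let g be a centered Gaussian random variable with variance σ² > 0 and let W : ℝ² → [0,∞) be measurable with E[W(x, x + g)] = 1 for every x ∈ ℝ and with W(x, y) even in the second variable y for every x. Let f1, f2 : ℝ → ℝ be differentiable functions such that f1 is even with f1'(u) ≥ 0 for all u ≥ 0, and f2 is odd with f2'(u) ≥ 0 for all u ≥ 0, and such that f1(x+g)·f2(x+g)·W(x,x+g), f1(x+g)·W(x,x+g) and f2(x+g)·W(x,x+g) are integrable for every x. Then for every x ≥ 0, E[f1(x+g)·f2(x+g)·W(x, x+g)] ≥ E[f1(x+g)·W(x, x+g)] · E[f2(x+g)·W(x, x+g)]. -/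
open MeasureTheory ProbabilityTheory Set

private lemma aux_mono (f : ℝ → ℝ) (hd : Differentiable ℝ f)
    (h : ∀ u : ℝ, 0 ≤ u → 0 ≤ deriv f u) : MonotoneOn f (Ici 0) := by
  apply monotoneOn_of_deriv_nonneg (convex_Ici 0) hd.continuous.continuousOn
    hd.differentiableOn
  intro u hu
  rw [interior_Ici] at hu
  exact h u hu.le

private lemma aux_h_mono {c s t : ℝ} (hc : 0 ≤ c) (hs : 0 ≤ s) (hst : s ≤ t) :
    (1 - Real.exp (-(c*s)))/(1 + Real.exp (-(c*s)))
      ≤ (1 - Real.exp (-(c*t)))/(1 + Real.exp (-(c*t))) := by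
  have ha : (0:ℝ) < Real.exp (-(c*s)) := Real.exp_pos _
  have hb : (0:ℝ) < Real.exp (-(c*t)) := Real.exp_pos _
  have hba : Real.exp (-(c*t)) ≤ Real.exp (-(c*s)) := Real.exp_le_exp.mpr (by nlinarith)
  rw [div_le_div_iff₀ (by linarith) (by linarith)]
  nlinarith

private lemma aux_h_nonneg {c t : ℝ} (hc : 0 ≤ c) (ht : 0 ≤ t) :
    0 ≤ (1 - Real.exp (-(c*t)))/(1 + Real.exp (-(c*t))) := by
  have h1 : Real.exp (-(c*t)) ≤ 1 := Real.exp_le_one_iff.mpr (by nlinarith)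
  have : (0:ℝ) < Real.exp (-(c*t)) := Real.exp_pos _
  apply div_nonneg <;> linarith

private lemma fkg_core (f1 f2 : ℝ → ℝ)
    (h1m : MonotoneOn f1 (Ici 0)) (h2m : MonotoneOn f2 (Ici 0))
    (h1e : ∀ u, f1 (-u) = f1 u) (h2o : ∀ u, f2 (-u) = -f2 u)
    (c : ℝ) (hc : 0 ≤ c) (y z : ℝ) :
    0 ≤ (f1 y - f1 z) * (f2 y - f2 z)
        + Real.exp (-(c*y)) * ((f1 (-y) - f1 z) * (f2 (-y) - f2 z))
        + Real.exp (-(c*z)) * ((f1 y - f1 (-z)) * (f2 y - f2 (-z)))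
        + Real.exp (-(c*y)) * Real.exp (-(c*z))
            * ((f1 (-y) - f1 (-z)) * (f2 (-y) - f2 (-z))) := by
  set g : ℝ → ℝ := fun t => f2 t * ((1 - Real.exp (-(c*t)))/(1 + Real.exp (-(c*t)))) with hg
  have hge : ∀ t, g (-t) = g t := by
    intro t
    have h1 : Real.exp (-(c*-t)) = (Real.exp (-(c*t)))⁻¹ := by
      rw [← Real.exp_neg]; ring_nf
    have hpos : (0:ℝ) < Real.exp (-(c*t)) := Real.exp_pos _
    simp only [hg, h2o, h1]
    field_simp
    ring
  have hf20 : f2 0 = 0 := by have := h2o 0; simp at this; linarith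
  have hgm : ∀ s t : ℝ, 0 ≤ s → s ≤ t → g s ≤ g t := by
    intro s t hs hst
    have hf2s : 0 ≤ f2 s := by
      have := h2m (mem_Ici.mpr le_rfl) (mem_Ici.mpr hs) hs
      rw [hf20] at this; exact this
    have hf2st : f2 s ≤ f2 t := h2m (mem_Ici.mpr hs) (mem_Ici.mpr (hs.trans hst)) hst
    exact mul_le_mul hf2st (aux_h_mono hc hs hst) (aux_h_nonneg hc hs) (by linarith)
  have key : ∀ a b : ℝ, 0 ≤ (f1 a - f1 b) * (g a - g b) := by
    intro a b
    have hf1a : f1 a = f1 |a| := by rcases abs_cases a with ⟨h,_⟩|⟨h,_⟩ <;> rw [h]; rw [h1e]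
    have hf1b : f1 b = f1 |b| := by rcases abs_cases b with ⟨h,_⟩|⟨h,_⟩ <;> rw [h]; rw [h1e]
    have hga : g a = g |a| := by rcases abs_cases a with ⟨h,_⟩|⟨h,_⟩ <;> rw [h]; rw [hge]
    have hgb : g b = g |b| := by rcases abs_cases b with ⟨h,_⟩|⟨h,_⟩ <;> rw [h]; rw [hge]
    rw [hf1a, hf1b, hga, hgb]
    rcases le_total |b| |a| with h|h
    · have h1 : f1 |b| ≤ f1 |a| := h1m (mem_Ici.mpr (abs_nonneg b)) (mem_Ici.mpr (abs_nonneg a)) h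
      have h2 : g |b| ≤ g |a| := hgm _ _ (abs_nonneg b) h
      nlinarith
    · have h1 : f1 |a| ≤ f1 |b| := h1m (mem_Ici.mpr (abs_nonneg a)) (mem_Ici.mpr (abs_nonneg b)) h
      have h2 : g |a| ≤ g |b| := hgm _ _ (abs_nonneg a) h
      nlinarith
  have hpy : (0:ℝ) < Real.exp (-(c*y)) := Real.exp_pos _
  have hpz : (0:ℝ) < Real.exp (-(c*z)) := Real.exp_pos _
  have halg : (f1 y - f1 z) * (f2 y - f2 z)
        + Real.exp (-(c*y)) * ((f1 (-y) - f1 z) * (f2 (-y) - f2 z))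
        + Real.exp (-(c*z)) * ((f1 y - f1 (-z)) * (f2 y - f2 (-z)))
        + Real.exp (-(c*y)) * Real.exp (-(c*z))
            * ((f1 (-y) - f1 (-z)) * (f2 (-y) - f2 (-z)))
      = (1 + Real.exp (-(c*y))) * (1 + Real.exp (-(c*z))) * ((f1 y - f1 z) * (g y - g z)) := by
    simp only [h1e, h2o, hg]
    field_simp
    ring
  rw [halg]
  exact mul_nonneg (by positivity) (key y z)

private lemma aux_transfer (σ2 : NNReal) (hσ : 0 < σ2) (x : ℝ) (φ : ℝ → ℝ) (hφ : Measurable φ) :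
    (Integrable (fun u => φ (x + u)) (gaussianReal 0 σ2) ↔
      Integrable (fun y => gaussianPDFReal x σ2 y * φ y) volume) ∧
    ∫ u, φ (x + u) ∂(gaussianReal 0 σ2) = ∫ y, gaussianPDFReal x σ2 y * φ y := by
  have hmap : (gaussianReal 0 σ2).map (x + ·) = gaussianReal x σ2 := by
    rw [gaussianReal_map_const_add, zero_add]
  have hν : gaussianReal x σ2
      = volume.withDensity (fun y => ((gaussianPDFReal x σ2 y).toNNReal : ENNReal)) := by
    rw [gaussianReal_of_var_ne_zero _ hσ.ne']
    rfl
  have hdm : Measurable (fun y => (gaussianPDFReal x σ2 y).toNNReal) :=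
    (measurable_gaussianPDFReal x σ2).real_toNNReal
  have hsmul : ∀ y, (gaussianPDFReal x σ2 y).toNNReal • φ y = gaussianPDFReal x σ2 y * φ y := by
    intro y
    rw [NNReal.smul_def, smul_eq_mul, Real.coe_toNNReal _ (gaussianPDFReal_nonneg x σ2 y)]
  constructor
  · rw [← Function.comp_def φ (x + ·),
      ← integrable_map_measure hφ.aestronglyMeasurable (measurable_const_add x).aemeasurable,
      hmap, hν, integrable_withDensity_iff_integrable_smul hdm]
    exact integrable_congr (ae_of_all _ hsmul)
  · rw [← integral_map (measurable_const_add x).aemeasurable hφ.aestronglyMeasurable, hmap, hν,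
      integral_withDensity_eq_integral_smul hdm]
    exact integral_congr_ae (ae_of_all _ hsmul)

private lemma aux_gpdf_neg (σ2 : NNReal) (hσ : 0 < σ2) (x y : ℝ) :
    gaussianPDFReal x σ2 (-y) = Real.exp (-(2*x/(σ2:ℝ)*y)) * gaussianPDFReal x σ2 y := by
  have hσR : (0:ℝ) < (σ2:ℝ) := hσ
  simp only [gaussianPDFReal]
  have h : Real.exp (-(2*x/(σ2:ℝ)*y)) * Real.exp (-(y-x)^2/(2*(σ2:ℝ)))
      = Real.exp (-((-y) - x)^2/(2*(σ2:ℝ))) := by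
    rw [← Real.exp_add]; congr 1; field_simp; ring
  rw [← h]; ring


private lemma fkg_volume (f1 f2 p : ℝ → ℝ) (c : ℝ) (hc : 0 ≤ c)
    (h1m : MonotoneOn f1 (Ici 0)) (h2m : MonotoneOn f2 (Ici 0))
    (h1e : ∀ u, f1 (-u) = f1 u) (h2o : ∀ u, f2 (-u) = -f2 u)
    (hp0 : ∀ y, 0 ≤ p y) (hpneg : ∀ y, p (-y) = Real.exp (-(c*y)) * p y)
    (hInt12 : Integrable (fun y => f1 y * f2 y * p y) volume)
    (hInt1 : Integrable (fun y => f1 y * p y) volume)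
    (hInt2 : Integrable (fun y => f2 y * p y) volume)
    (hIntp : Integrable p volume)
    (hN : ∫ y, p y = 1) :
    (∫ y, f1 y * p y) * (∫ y, f2 y * p y) ≤ ∫ y, f1 y * f2 y * p y := by
  have hIneg : ∀ φ : ℝ → ℝ, Integrable φ volume → Integrable (fun y => φ (-y)) volume :=
    fun φ h => ((Measure.measurePreserving_neg (volume : Measure ℝ)).integrable_comp
      h.aestronglyMeasurable).mpr h
  have hrefl : ∀ φ : ℝ → ℝ, ∫ y, φ (-y) = ∫ y, φ y := fun φ => integral_neg_eq_self φ volume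
  set L : ℝ → ℝ := fun b => (∫ y, f1 y * f2 y * p y) * p b + f1 b * f2 b * p b
      - (∫ y, f1 y * p y) * (f2 b * p b) - (∫ y, f2 y * p y) * (f1 b * p b) with hL
  have hexp : ∀ b : ℝ, (fun y => (f1 y - f1 b) * (f2 y - f2 b) * (p y * p b))
      = fun y => (f1 y * f2 y * p y) * p b + p y * (f1 b * f2 b * p b)
          - (f1 y * p y) * (f2 b * p b) - (f2 y * p y) * (f1 b * p b) := by
    intro b; funext y; ring
  have hd_int : ∀ b : ℝ,
      Integrable (fun y => (f1 y - f1 b) * (f2 y - f2 b) * (p y * p b)) volume := by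
    intro b
    rw [hexp b]
    exact (((hInt12.mul_const _).add (hIntp.mul_const _)).sub (hInt1.mul_const _)).sub
      (hInt2.mul_const _)
  have hd_eq : ∀ b : ℝ, ∫ y, (f1 y - f1 b) * (f2 y - f2 b) * (p y * p b) = L b := by
    intro b
    have j1 : Integrable (fun y => f1 y * f2 y * p y * p b) volume := hInt12.mul_const _
    have j2 : Integrable (fun y => p y * (f1 b * f2 b * p b)) volume := hIntp.mul_const _
    have j3 : Integrable (fun y => f1 y * p y * (f2 b * p b)) volume := hInt1.mul_const _
    have j4 : Integrable (fun y => f2 y * p y * (f1 b * p b)) volume := hInt2.mul_const _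
    have j12 : Integrable
        (fun y => f1 y * f2 y * p y * p b + p y * (f1 b * f2 b * p b)) volume := j1.add j2
    have j123 : Integrable (fun y => f1 y * f2 y * p y * p b + p y * (f1 b * f2 b * p b)
        - f1 y * p y * (f2 b * p b)) volume := j12.sub j3
    rw [hexp b, integral_sub j123 j4, integral_sub j12 j3, integral_add j1 j2,
      integral_mul_const, integral_mul_const, integral_mul_const, integral_mul_const, hN]
    simp only [hL]
    ring
  have hK : ∀ y b : ℝ, 0 ≤ (f1 y - f1 b) * (f2 y - f2 b) * (p y * p b)
      + (f1 (-y) - f1 b) * (f2 (-y) - f2 b) * (p (-y) * p b)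
      + (f1 y - f1 (-b)) * (f2 y - f2 (-b)) * (p y * p (-b))
      + (f1 (-y) - f1 (-b)) * (f2 (-y) - f2 (-b)) * (p (-y) * p (-b)) := by
    intro y b
    have hcore := fkg_core f1 f2 h1m h2m h1e h2o c hc y b
    have heq : (f1 y - f1 b) * (f2 y - f2 b) * (p y * p b)
        + (f1 (-y) - f1 b) * (f2 (-y) - f2 b) * (p (-y) * p b)
        + (f1 y - f1 (-b)) * (f2 y - f2 (-b)) * (p y * p (-b))
        + (f1 (-y) - f1 (-b)) * (f2 (-y) - f2 (-b)) * (p (-y) * p (-b))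
        = p y * p b * ((f1 y - f1 b) * (f2 y - f2 b)
          + Real.exp (-(c*y)) * ((f1 (-y) - f1 b) * (f2 (-y) - f2 b))
          + Real.exp (-(c*b)) * ((f1 y - f1 (-b)) * (f2 y - f2 (-b)))
          + Real.exp (-(c*y)) * Real.exp (-(c*b))
              * ((f1 (-y) - f1 (-b)) * (f2 (-y) - f2 (-b)))) := by
      rw [hpneg y, hpneg b]; ring
    rw [heq]
    exact mul_nonneg (mul_nonneg (hp0 y) (hp0 b)) hcore
  have hM_eq : ∀ b : ℝ, (∫ y, ((f1 y - f1 b) * (f2 y - f2 b) * (p y * p b)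
      + (f1 (-y) - f1 b) * (f2 (-y) - f2 b) * (p (-y) * p b)
      + (f1 y - f1 (-b)) * (f2 y - f2 (-b)) * (p y * p (-b))
      + (f1 (-y) - f1 (-b)) * (f2 (-y) - f2 (-b)) * (p (-y) * p (-b))))
      = L b + L b + L (-b) + L (-b) := by
    intro b
    have i1 := hd_int b
    have i2 : Integrable (fun y => (f1 (-y) - f1 b) * (f2 (-y) - f2 b) * (p (-y) * p b))
        volume := hIneg _ (hd_int b)
    have i3 := hd_int (-b)
    have i4 : Integrable (fun y => (f1 (-y) - f1 (-b)) * (f2 (-y) - f2 (-b)) * (p (-y) * p (-b)))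
        volume := hIneg _ (hd_int (-b))
    have i12 : Integrable (fun y => (f1 y - f1 b) * (f2 y - f2 b) * (p y * p b)
        + (f1 (-y) - f1 b) * (f2 (-y) - f2 b) * (p (-y) * p b)) volume := i1.add i2
    have i123 : Integrable (fun y => (f1 y - f1 b) * (f2 y - f2 b) * (p y * p b)
        + (f1 (-y) - f1 b) * (f2 (-y) - f2 b) * (p (-y) * p b)
        + (f1 y - f1 (-b)) * (f2 y - f2 (-b)) * (p y * p (-b))) volume := i12.add i3
    rw [integral_add i123 i4, integral_add i12 i3, integral_add i1 i2]
    have r2 : ∫ y, (f1 (-y) - f1 b) * (f2 (-y) - f2 b) * (p (-y) * p b)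
        = ∫ y, (f1 y - f1 b) * (f2 y - f2 b) * (p y * p b) :=
      hrefl (fun y => (f1 y - f1 b) * (f2 y - f2 b) * (p y * p b))
    have r4 : ∫ y, (f1 (-y) - f1 (-b)) * (f2 (-y) - f2 (-b)) * (p (-y) * p (-b))
        = ∫ y, (f1 y - f1 (-b)) * (f2 y - f2 (-b)) * (p y * p (-b)) :=
      hrefl (fun y => (f1 y - f1 (-b)) * (f2 y - f2 (-b)) * (p y * p (-b)))
    rw [r2, r4, hd_eq b, hd_eq (-b)]
  have hLL : ∀ b : ℝ, 0 ≤ L b + L (-b) := by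
    intro b
    have h0 : (0:ℝ) ≤ L b + L b + L (-b) + L (-b) := by
      rw [← hM_eq b]
      exact integral_nonneg (fun y => hK y b)
    linarith
  have hLi : Integrable L volume := by
    simp only [hL]
    exact (((hIntp.const_mul _).add hInt12).sub (hInt2.const_mul _)).sub (hInt1.const_mul _)
  have hLnegi : Integrable (fun b => L (-b)) volume := hIneg L hLi
  have hfinal : 0 ≤ ∫ b, (L b + L (-b)) := integral_nonneg hLL
  rw [integral_add hLi hLnegi, hrefl L] at hfinal
  have hintL : ∫ b, L b = (∫ y, f1 y * f2 y * p y) + (∫ y, f1 y * f2 y * p y)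
      - (∫ y, f1 y * p y) * (∫ y, f2 y * p y) - (∫ y, f1 y * p y) * (∫ y, f2 y * p y) := by
    simp only [hL]
    have k1 : Integrable (fun b => (∫ y, f1 y * f2 y * p y) * p b) volume := hIntp.const_mul _
    have k3 : Integrable (fun b => (∫ y, f1 y * p y) * (f2 b * p b)) volume := hInt2.const_mul _
    have k4 : Integrable (fun b => (∫ y, f2 y * p y) * (f1 b * p b)) volume := hInt1.const_mul _
    have k12 : Integrable
        (fun b => (∫ y, f1 y * f2 y * p y) * p b + f1 b * f2 b * p b) volume := k1.add hInt12
    have k123 : Integrable (fun b => (∫ y, f1 y * f2 y * p y) * p b + f1 b * f2 b * p b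
        - (∫ y, f1 y * p y) * (f2 b * p b)) volume := k12.sub k3
    rw [integral_sub k123 k4, integral_sub k12 k3, integral_add k1 hInt12,
      integral_const_mul, integral_const_mul, integral_const_mul, hN]
    ring
  rw [hintL] at hfinal
  linarith

theorem fkg_gaussian_tilted_even_odd (σ2 : NNReal) (hσ : 0 < σ2)
    (W : ℝ → ℝ → ℝ) (hWmeas : Measurable (Function.uncurry W))
    (hWnonneg : ∀ x y, 0 ≤ W x y)
    (hWnorm : ∀ x : ℝ, ∫ u, W x (x + u) ∂(gaussianReal 0 σ2) = 1)
    (hWeven : ∀ x y : ℝ, W x (-y) = W x y)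
    (f1 f2 : ℝ → ℝ) (hf1diff : Differentiable ℝ f1) (hf2diff : Differentiable ℝ f2)
    (hf1even : ∀ u, f1 (-u) = f1 u) (hf2odd : ∀ u, f2 (-u) = -f2 u)
    (hf1deriv : ∀ u : ℝ, 0 ≤ u → 0 ≤ deriv f1 u)
    (hf2deriv : ∀ u : ℝ, 0 ≤ u → 0 ≤ deriv f2 u)
    (hint12 : ∀ x : ℝ,
      Integrable (fun u => f1 (x + u) * f2 (x + u) * W x (x + u)) (gaussianReal 0 σ2))
    (hint1 : ∀ x : ℝ, Integrable (fun u => f1 (x + u) * W x (x + u)) (gaussianReal 0 σ2))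
    (hint2 : ∀ x : ℝ, Integrable (fun u => f2 (x + u) * W x (x + u)) (gaussianReal 0 σ2)) :
    ∀ x : ℝ, 0 ≤ x →
      (∫ u, f1 (x + u) * W x (x + u) ∂(gaussianReal 0 σ2)) *
          (∫ u, f2 (x + u) * W x (x + u) ∂(gaussianReal 0 σ2))
        ≤ ∫ u, f1 (x + u) * f2 (x + u) * W x (x + u) ∂(gaussianReal 0 σ2) := by
  intro x hx
  have hσR : (0:ℝ) < (σ2:ℝ) := hσ
  have hf1m : Measurable f1 := hf1diff.continuous.measurable
  have hf2m : Measurable f2 := hf2diff.continuous.measurable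
  have hWx : Measurable (W x) := hWmeas.comp measurable_prodMk_left
  set p : ℝ → ℝ := fun y => gaussianPDFReal x σ2 y * W x y with hp
  set c : ℝ := 2 * x / (σ2:ℝ) with hcdef
  have hc : 0 ≤ c := by positivity
  have hp0 : ∀ y, 0 ≤ p y := fun y =>
    mul_nonneg (gaussianPDFReal_nonneg x σ2 y) (hWnonneg x y)
  have hpneg : ∀ y, p (-y) = Real.exp (-(c*y)) * p y := by
    intro y
    simp only [hp]
    rw [aux_gpdf_neg σ2 hσ x y, hWeven x y, hcdef]
    ring
  -- transfers
  have t12 := aux_transfer σ2 hσ x (fun y => f1 y * f2 y * W x y) ((hf1m.mul hf2m).mul hWx)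
  have t1 := aux_transfer σ2 hσ x (fun y => f1 y * W x y) (hf1m.mul hWx)
  have t2 := aux_transfer σ2 hσ x (fun y => f2 y * W x y) (hf2m.mul hWx)
  have tW := aux_transfer σ2 hσ x (fun y => W x y) hWx
  have hc12 : ∀ y : ℝ, gaussianPDFReal x σ2 y * (f1 y * f2 y * W x y) = f1 y * f2 y * p y := by
    intro y; simp only [hp]; ring
  have hc1 : ∀ y : ℝ, gaussianPDFReal x σ2 y * (f1 y * W x y) = f1 y * p y := by
    intro y; simp only [hp]; ring
  have hc2 : ∀ y : ℝ, gaussianPDFReal x σ2 y * (f2 y * W x y) = f2 y * p y := by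
    intro y; simp only [hp]; ring
  have hE12 : (∫ u, f1 (x + u) * f2 (x + u) * W x (x + u) ∂(gaussianReal 0 σ2))
      = ∫ y, f1 y * f2 y * p y :=
    t12.2.trans (integral_congr_ae (ae_of_all _ hc12))
  have hE1 : (∫ u, f1 (x + u) * W x (x + u) ∂(gaussianReal 0 σ2)) = ∫ y, f1 y * p y :=
    t1.2.trans (integral_congr_ae (ae_of_all _ hc1))
  have hE2 : (∫ u, f2 (x + u) * W x (x + u) ∂(gaussianReal 0 σ2)) = ∫ y, f2 y * p y :=
    t2.2.trans (integral_congr_ae (ae_of_all _ hc2))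
  have hN : ∫ y, p y = 1 := by
    have h := hWnorm x
    rw [tW.2] at h
    exact h
  have hInt12 : Integrable (fun y => f1 y * f2 y * p y) volume :=
    (integrable_congr (ae_of_all _ hc12)).mp (t12.1.mp (hint12 x))
  have hInt1 : Integrable (fun y => f1 y * p y) volume :=
    (integrable_congr (ae_of_all _ hc1)).mp (t1.1.mp (hint1 x))
  have hInt2 : Integrable (fun y => f2 y * p y) volume :=
    (integrable_congr (ae_of_all _ hc2)).mp (t2.1.mp (hint2 x))
  have hIntWμ : Integrable (fun u => W x (x + u)) (gaussianReal 0 σ2) := by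
    by_contra h
    have h1 := hWnorm x
    rw [integral_undef h] at h1
    exact one_ne_zero h1.symm
  have hIntp : Integrable p volume := tW.1.mp hIntWμ
  rw [hE12, hE1, hE2]
  exact fkg_volume f1 f2 p c hc
    (aux_mono f1 hf1diff hf1deriv) (aux_mono f2 hf2diff hf2deriv)
    hf1even hf2odd hp0 hpneg hInt12 hInt1 hInt2 hIntp hN
end

section
/- Let (φ1, φ2) be an admissible even pair. Then there exist sequences of functions (φ_{1,r})_{r≥1}, (φ_{2,r})_{r≥1} and positive reals (M_r)_{r≥1} such that for every r: (φ_{1,r}, φ_{2,r}) is an admissible even pair; for l = 1,2, φ_{l,r} is affine on (−∞, −M_r] and affine on [M_r, ∞); φ_{l,r} ≤ φ_l pointwise; and φ_{l,r}(x) → φ_l(x) as r → ∞ for every x ∈ ℝ. -/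
open MeasureTheory Set Filter intervalIntegral

/-- An admissible even pair. -/
def AdmissibleEvenPair (φ1 φ2 : ℝ → ℝ) : Prop :=
  TwiceDiffBounded φ1 ∧ TwiceDiffBounded φ2 ∧
    (∀ x, φ1 (-x) = φ1 x) ∧ (∀ x, φ2 (-x) = φ2 x) ∧
    ConvexOn ℝ Set.univ φ1 ∧ ConvexOn ℝ Set.univ φ2 ∧
    (∀ x, φ1 x ≤ φ2 x) ∧ (∀ x, 0 ≤ x → deriv φ1 x ≤ deriv φ2 x)

noncomputable def sfun (M t : ℝ) : ℝ := Real.smoothTransition (M + 1 - |t|)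

lemma sfun_cont (M : ℝ) : Continuous (sfun M) :=
  Real.smoothTransition.continuous.comp (by continuity)

lemma sfun_nonneg (M t : ℝ) : 0 ≤ sfun M t := Real.smoothTransition.nonneg _

lemma sfun_le_one (M t : ℝ) : sfun M t ≤ 1 := Real.smoothTransition.le_one _

lemma sfun_even (M t : ℝ) : sfun M (-t) = sfun M t := by simp [sfun]

lemma sfun_eq_one {M t : ℝ} (h : |t| ≤ M) : sfun M t = 1 :=
  Real.smoothTransition.one_of_one_le (by linarith)

lemma sfun_eq_zero {M t : ℝ} (h : M + 1 ≤ |t|) : sfun M t = 0 :=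
  Real.smoothTransition.zero_of_nonpos (by linarith)

lemma sfun_ii (M a b : ℝ) : IntervalIntegrable (sfun M) volume a b :=
  (sfun_cont M).intervalIntegrable a b

noncomputable def theta (M x : ℝ) : ℝ := ∫ t in (0:ℝ)..x, sfun M t

lemma theta_hasDerivAt (M x : ℝ) : HasDerivAt (theta M) (sfun M x) x :=
  integral_hasDerivAt_right (sfun_ii M 0 x)
    ((sfun_cont M).stronglyMeasurableAtFilter _ _) (sfun_cont M).continuousAt

lemma theta_diff (M : ℝ) : Differentiable ℝ (theta M) :=
  fun x => (theta_hasDerivAt M x).differentiableAt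

lemma theta_deriv (M x : ℝ) : deriv (theta M) x = sfun M x :=
  (theta_hasDerivAt M x).deriv

lemma theta_mono (M : ℝ) : Monotone (theta M) :=
  monotone_of_deriv_nonneg (theta_diff M) (fun x => by
    rw [theta_deriv]; exact sfun_nonneg M x)

lemma theta_odd (M x : ℝ) : theta M (-x) = - theta M x := by
  have : (∫ t in (0:ℝ)..x, sfun M (-t)) = ∫ t in (-x)..(0:ℝ), sfun M t := by
    simpa using integral_comp_neg (a := (0:ℝ)) (b := x) (f := sfun M)
  simp only [sfun_even] at this
  unfold theta
  rw [show (∫ t in (0:ℝ)..x, sfun M t) = ∫ t in (-x)..(0:ℝ), sfun M t from this,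
    integral_symm]

lemma theta_eq {M x : ℝ} (h0 : 0 ≤ x) (h : x ≤ M) : theta M x = x := by
  have : (∫ t in (0:ℝ)..x, sfun M t) = ∫ t in (0:ℝ)..x, (1:ℝ) := by
    apply integral_congr
    intro t ht
    rw [uIcc_of_le h0] at ht
    exact sfun_eq_one (by rw [abs_of_nonneg ht.1]; linarith [ht.2])
  unfold theta
  rw [this]; simp

lemma theta_eq' {M x : ℝ} (hM : 0 ≤ M) (h : |x| ≤ M) : theta M x = x := by
  rcases le_or_gt 0 x with hx | hx
  · exact theta_eq hx (by rwa [abs_of_nonneg hx] at h)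
  · have := theta_eq (M := M) (x := -x) (by linarith) (by rwa [abs_of_neg hx] at h)
    have h2 := theta_odd M x
    rw [this] at h2; linarith

lemma theta_nonneg {M x : ℝ} (h : 0 ≤ x) : 0 ≤ theta M x := by
  have := theta_mono M h
  rwa [show theta M 0 = 0 by simp [theta]] at this

lemma theta_le {M x : ℝ} (h : 0 ≤ x) : theta M x ≤ x := by
  have : (∫ t in (0:ℝ)..x, sfun M t) ≤ ∫ t in (0:ℝ)..x, (1:ℝ) :=
    integral_mono_on h (sfun_ii M 0 x) (intervalIntegrable_const)
      (fun t _ => sfun_le_one M t)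
  unfold theta
  simpa using this

lemma theta_const {M x : ℝ} (h : M + 1 ≤ x) : theta M x = theta M (M + 1) := by
  have : theta M x - theta M (M+1) = ∫ t in (M+1)..x, sfun M t := by
    unfold theta
    rw [sub_eq_iff_eq_add']
    exact (integral_add_adjacent_intervals (sfun_ii M 0 (M+1)) (sfun_ii M (M+1) x)).symm
  have hz : (∫ t in (M+1)..x, sfun M t) = 0 := by
    have : (∫ t in (M+1)..x, sfun M t) = ∫ t in (M+1)..x, (0:ℝ) := by
      apply integral_congr
      intro t ht
      rw [uIcc_of_le h] at ht
      have h1 : M + 1 ≤ t := ht.1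
      exact sfun_eq_zero (le_trans h1 (le_abs_self t))
    simp [this]
  rw [hz] at this; linarith

noncomputable def psiA (M : ℝ) (φ : ℝ → ℝ) (x : ℝ) : ℝ :=
  φ 0 + ∫ t in (0:ℝ)..x, deriv φ (theta M t)

section OnePhi

variable {φ : ℝ → ℝ} (hd1 : Differentiable ℝ φ) (hd2 : Differentiable ℝ (deriv φ))
  (heven : ∀ x, φ (-x) = φ x) (hconv : ConvexOn ℝ Set.univ φ) (M : ℝ)

include hd1 heven in
lemma deriv_odd : ∀ x, deriv φ (-x) = - deriv φ x := by
  intro x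
  have h1 : deriv (fun y => φ (-y)) x = - deriv φ (-x) := deriv_comp_neg φ (x := x)
  have h2 : (fun y => φ (-y)) = φ := funext heven
  rw [h2] at h1
  linarith

include hd1 hconv in
lemma dmono : Monotone (deriv φ) := by
  have := hconv.monotoneOn_deriv (fun x _ => (hd1 x))
  exact monotoneOn_univ.mp this

include hd2 in
lemma gcont : Continuous (fun t => deriv φ (theta M t)) :=
  hd2.continuous.comp (theta_diff M).continuous

include hd2 in
lemma g_ii (a b : ℝ) : IntervalIntegrable (fun t => deriv φ (theta M t)) volume a b :=
  (gcont hd2 M).intervalIntegrable a b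

include hd2 in
lemma psiA_hasDerivAt (x : ℝ) :
    HasDerivAt (psiA M φ) (deriv φ (theta M x)) x := by
  have := integral_hasDerivAt_right (g_ii hd2 M 0 x)
    ((gcont hd2 M).stronglyMeasurableAtFilter _ _) (gcont hd2 M).continuousAt
  exact this.const_add (φ 0)

include hd2 in
lemma psiA_diff : Differentiable ℝ (psiA M φ) :=
  fun x => (psiA_hasDerivAt hd2 M x).differentiableAt

include hd2 in
lemma psiA_deriv : deriv (psiA M φ) = fun x => deriv φ (theta M x) :=
  funext fun x => (psiA_hasDerivAt hd2 M x).deriv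

include hd1 hd2 heven in
lemma psiA_even (x : ℝ) : psiA M φ (-x) = psiA M φ x := by
  have godd : ∀ t, deriv φ (theta M (-t)) = - deriv φ (theta M t) := by
    intro t
    rw [theta_odd, deriv_odd hd1 heven]
  have h1 : (∫ t in (0:ℝ)..x, deriv φ (theta M (-t)))
      = ∫ t in (-x)..(0:ℝ), deriv φ (theta M t) := by
    simpa using integral_comp_neg (a := (0:ℝ)) (b := x) (f := fun t => deriv φ (theta M t))
  have h2 : (∫ t in (0:ℝ)..x, deriv φ (theta M (-t)))
      = - ∫ t in (0:ℝ)..x, deriv φ (theta M t) := by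
    rw [show (fun t => deriv φ (theta M (-t))) = fun t => -(deriv φ (theta M t)) from
      funext godd] at *
    exact integral_neg
  have h3 : (∫ t in (-x)..(0:ℝ), deriv φ (theta M t))
      = - ∫ t in (0:ℝ)..(-x), deriv φ (theta M t) := integral_symm _ _
  unfold psiA
  have : (∫ t in (0:ℝ)..(-x), deriv φ (theta M t))
      = ∫ t in (0:ℝ)..x, deriv φ (theta M t) := by
    rw [h2] at h1; rw [h3] at h1; linarith
  rw [this]

include hd1 hd2 in
lemma psiA_eq_of_nonneg {x : ℝ} (h0 : 0 ≤ x) (h : x ≤ M) : psiA M φ x = φ x := by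
  have hftc : (∫ t in (0:ℝ)..x, deriv φ t) = φ x - φ 0 :=
    integral_deriv_eq_sub (fun t _ => hd1 t) (hd2.continuous.intervalIntegrable 0 x)
  have hcongr : (∫ t in (0:ℝ)..x, deriv φ (theta M t)) = ∫ t in (0:ℝ)..x, deriv φ t := by
    apply integral_congr
    intro t ht
    rw [uIcc_of_le h0] at ht
    show deriv φ (theta M t) = deriv φ t
    rw [theta_eq ht.1 (le_trans ht.2 h)]
  unfold psiA
  rw [hcongr, hftc]; ring

include hd1 hd2 heven in
lemma psiA_eq (hM : 0 ≤ M) {x : ℝ} (h : |x| ≤ M) : psiA M φ x = φ x := by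
  rcases le_or_gt 0 x with hx | hx
  · exact psiA_eq_of_nonneg hd1 hd2 M hx (by rwa [abs_of_nonneg hx] at h)
  · rw [← psiA_even hd1 hd2 heven M x, ← heven x]
    exact psiA_eq_of_nonneg hd1 hd2 M (by linarith) (by rwa [abs_of_neg hx] at h)

include hd1 hd2 heven hconv in
lemma psiA_le (x : ℝ) : psiA M φ x ≤ φ x := by
  have key : ∀ y : ℝ, 0 ≤ y → psiA M φ y ≤ φ y := by
    intro y hy
    have hftc : (∫ t in (0:ℝ)..y, deriv φ t) = φ y - φ 0 :=
      integral_deriv_eq_sub (fun t _ => hd1 t) (hd2.continuous.intervalIntegrable 0 y)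
    have hmono := dmono hd1 hconv
    have hle : (∫ t in (0:ℝ)..y, deriv φ (theta M t)) ≤ ∫ t in (0:ℝ)..y, deriv φ t := by
      apply integral_mono_on hy (g_ii hd2 M 0 y) (hd2.continuous.intervalIntegrable 0 y)
      intro t ht
      exact hmono (theta_le ht.1)
    unfold psiA
    linarith
  rcases le_or_gt 0 x with hx | hx
  · exact key x hx
  · rw [← psiA_even hd1 hd2 heven M x, ← heven x]
    exact key (-x) (by linarith)

include hd2 in
lemma psiA_affine {x : ℝ} (h : M + 1 ≤ x) :
    psiA M φ x = (deriv φ (theta M (M+1))) * x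
      + (psiA M φ (M+1) - (deriv φ (theta M (M+1))) * (M+1)) := by
  set A := deriv φ (theta M (M+1)) with hA
  have hsplit : psiA M φ x - psiA M φ (M+1) = ∫ t in (M+1)..x, deriv φ (theta M t) := by
    unfold psiA
    rw [add_sub_add_left_eq_sub, sub_eq_iff_eq_add']
    exact (integral_add_adjacent_intervals (g_ii hd2 M 0 (M+1)) (g_ii hd2 M (M+1) x)).symm
  have hconst : (∫ t in (M+1)..x, deriv φ (theta M t)) = (x - (M+1)) * A := by
    have : (∫ t in (M+1)..x, deriv φ (theta M t)) = ∫ _t in (M+1)..x, A := by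
      apply integral_congr
      intro t ht
      rw [uIcc_of_le h] at ht
      show deriv φ (theta M t) = A
      rw [theta_const ht.1]
    rw [this, intervalIntegral.integral_const, smul_eq_mul]
  rw [hconst] at hsplit
  linarith [hsplit]

include hd1 hd2 hconv in
lemma psiA_convex : ConvexOn ℝ Set.univ (psiA M φ) := by
  apply Monotone.convexOn_univ_of_deriv (psiA_diff hd2 M)
  rw [psiA_deriv hd2 M]
  exact (dmono hd1 hconv).comp (theta_mono M)

include hd2 in
lemma psiA_deriv_hasDerivAt (x : ℝ) :
    HasDerivAt (deriv (psiA M φ)) (deriv (deriv φ) (theta M x) * sfun M x) x := by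
  rw [psiA_deriv hd2 M]
  exact HasDerivAt.comp x ((hd2 (theta M x)).hasDerivAt) (theta_hasDerivAt M x)

include hd1 hd2 in
lemma psiA_tdb (C1 C2 : ℝ) (hC1 : ∀ x, |deriv φ x| ≤ C1) (hC2 : ∀ x, |deriv (deriv φ) x| ≤ C2) :
    TwiceDiffBounded (psiA M φ) := by
  refine ⟨psiA_diff hd2 M, fun x => (psiA_deriv_hasDerivAt hd2 M x).differentiableAt,
    ⟨C1, fun x => ?_⟩, ⟨C2, fun x => ?_⟩⟩
  · rw [psiA_deriv hd2 M]; exact hC1 _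
  · rw [(psiA_deriv_hasDerivAt hd2 M x).deriv, abs_mul]
    calc |deriv (deriv φ) (theta M x)| * |sfun M x|
        ≤ C2 * 1 := by
          have h1 : |sfun M x| ≤ 1 := by
            rw [abs_of_nonneg (sfun_nonneg M x)]; exact sfun_le_one M x
          exact mul_le_mul (hC2 _) h1 (abs_nonneg _)
            (le_trans (abs_nonneg (deriv (deriv φ) (theta M x))) (hC2 _))
      _ = C2 := mul_one C2

end OnePhi

theorem approximation_even_pair (φ1 φ2 : ℝ → ℝ) (h : AdmissibleEvenPair φ1 φ2) :
    ∃ (ψ1 ψ2 : ℕ → ℝ → ℝ) (M : ℕ → ℝ),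
      (∀ r : ℕ, 0 < M r) ∧
      (∀ r : ℕ, AdmissibleEvenPair (ψ1 r) (ψ2 r)) ∧
      (∀ r : ℕ, ∃ A B : ℝ, ∀ x : ℝ, M r ≤ x → ψ1 r x = A * x + B) ∧
      (∀ r : ℕ, ∃ A B : ℝ, ∀ x : ℝ, x ≤ -M r → ψ1 r x = A * x + B) ∧
      (∀ r : ℕ, ∃ A B : ℝ, ∀ x : ℝ, M r ≤ x → ψ2 r x = A * x + B) ∧
      (∀ r : ℕ, ∃ A B : ℝ, ∀ x : ℝ, x ≤ -M r → ψ2 r x = A * x + B) ∧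
      (∀ r : ℕ, ∀ x : ℝ, ψ1 r x ≤ φ1 x) ∧
      (∀ r : ℕ, ∀ x : ℝ, ψ2 r x ≤ φ2 x) ∧
      (∀ x : ℝ, Tendsto (fun r => ψ1 r x) atTop (nhds (φ1 x))) ∧
      (∀ x : ℝ, Tendsto (fun r => ψ2 r x) atTop (nhds (φ2 x))) := by
  obtain ⟨h1, h2, he1, he2, hc1, hc2, hle, hdle⟩ := h
  obtain ⟨hd11, hd12, ⟨C11, hC11⟩, ⟨C12, hC12⟩⟩ := h1
  obtain ⟨hd21, hd22, ⟨C21, hC21⟩, ⟨C22, hC22⟩⟩ := h2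
  -- pointwise comparison of the two approximations
  have pair_le : ∀ (M : ℝ) (x : ℝ), psiA M φ1 x ≤ psiA M φ2 x := by
    intro M x
    have key : ∀ y : ℝ, 0 ≤ y → psiA M φ1 y ≤ psiA M φ2 y := by
      intro y hy
      have hint : (∫ t in (0:ℝ)..y, deriv φ1 (theta M t))
          ≤ ∫ t in (0:ℝ)..y, deriv φ2 (theta M t) := by
        apply integral_mono_on hy (g_ii hd12 M 0 y) (g_ii hd22 M 0 y)
        intro t ht
        exact hdle _ (theta_nonneg ht.1)
      unfold psiA
      have := hle 0
      linarith
    rcases le_or_gt 0 x with hx | hx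
    · exact key x hx
    · rw [← psiA_even hd11 hd12 he1 M x, ← psiA_even hd21 hd22 he2 M x]
      exact key (-x) (by linarith)
  refine ⟨fun r => psiA ((r:ℝ)+1) φ1, fun r => psiA ((r:ℝ)+1) φ2,
    fun r => (r:ℝ)+1+1, ?_, ?_, ?_, ?_, ?_, ?_, ?_, ?_, ?_, ?_⟩
  · intro r; positivity
  · intro r
    refine ⟨psiA_tdb hd11 hd12 _ C11 C12 hC11 hC12,
      psiA_tdb hd21 hd22 _ C21 C22 hC21 hC22,
      psiA_even hd11 hd12 he1 _, psiA_even hd21 hd22 he2 _,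
      psiA_convex hd11 hd12 hc1 _, psiA_convex hd21 hd22 hc2 _,
      pair_le _, ?_⟩
    intro x hx
    rw [psiA_deriv hd12, psiA_deriv hd22]
    exact hdle _ (theta_nonneg hx)
  · intro r
    exact ⟨_, _, fun x hx => psiA_affine hd12 ((r:ℝ)+1) hx⟩
  · intro r
    refine ⟨-(deriv φ1 (theta ((r:ℝ)+1) (((r:ℝ)+1)+1))),
      psiA ((r:ℝ)+1) φ1 (((r:ℝ)+1)+1)
        - (deriv φ1 (theta ((r:ℝ)+1) (((r:ℝ)+1)+1))) * (((r:ℝ)+1)+1), fun x hx => ?_⟩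
    beta_reduce at hx ⊢
    have hx' : ((r:ℝ)+1)+1 ≤ -x := by linarith
    rw [← psiA_even hd11 hd12 he1 ((r:ℝ)+1) x, psiA_affine hd12 ((r:ℝ)+1) hx']
    ring
  · intro r
    exact ⟨_, _, fun x hx => psiA_affine hd22 ((r:ℝ)+1) hx⟩
  · intro r
    refine ⟨-(deriv φ2 (theta ((r:ℝ)+1) (((r:ℝ)+1)+1))),
      psiA ((r:ℝ)+1) φ2 (((r:ℝ)+1)+1)
        - (deriv φ2 (theta ((r:ℝ)+1) (((r:ℝ)+1)+1))) * (((r:ℝ)+1)+1), fun x hx => ?_⟩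
    beta_reduce at hx ⊢
    have hx' : ((r:ℝ)+1)+1 ≤ -x := by linarith
    rw [← psiA_even hd21 hd22 he2 ((r:ℝ)+1) x, psiA_affine hd22 ((r:ℝ)+1) hx']
    ring
  · intro r x
    exact psiA_le hd11 hd12 he1 hc1 _ x
  · intro r x
    exact psiA_le hd21 hd22 he2 hc2 _ x
  · intro x
    apply Tendsto.congr' _ tendsto_const_nhds
    filter_upwards [eventually_ge_atTop ⌈|x|⌉₊] with r hr
    have : |x| ≤ (r:ℝ)+1 := by
      calc |x| ≤ (⌈|x|⌉₊:ℝ) := Nat.le_ceil _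
        _ ≤ (r:ℝ) := by exact_mod_cast hr
        _ ≤ (r:ℝ)+1 := by linarith
    exact (psiA_eq hd11 hd12 he1 _ (by positivity) this).symm
  · intro x
    apply Tendsto.congr' _ tendsto_const_nhds
    filter_upwards [eventually_ge_atTop ⌈|x|⌉₊] with r hr
    have : |x| ≤ (r:ℝ)+1 := by
      calc |x| ≤ (⌈|x|⌉₊:ℝ) := Nat.le_ceil _
        _ ≤ (r:ℝ) := by exact_mod_cast hr
        _ ≤ (r:ℝ)+1 := by linarith
    exact (psiA_eq hd21 hd22 he2 _ (by positivity) this).symm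
end

section
/- Let m > 0 and M ≥ 0, and let φ : ℝ → ℝ be continuous with φ(x) = A·x + B for all x ≥ M and φ(x) = A'·x + B' for all x ≤ −M, where A, A', B, B' are real constants. Then (E[exp(m·φ(x + √t·Z))])^{1/m} · exp(−(A·x + B + A²·m·t/2)) → 1 as x → +∞, uniformly over t ∈ [0,1], and (E[exp(m·φ(x + √t·Z))])^{1/m} · exp(−(A'·x + B' + (A')²·m·t/2)) → 1 as x → −∞, uniformly over t ∈ [0,1]. -/
open MeasureTheory ProbabilityTheory Set Filter Real
open scoped ENNReal NNReal Topology

lemma exp_sub_sq_integrable (c : ℝ) :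
    Integrable (fun z : ℝ => Real.exp (c * z - z ^ 2 / 2)) := by
  have h : ∀ z : ℝ, Real.exp (c * z - z ^ 2 / 2)
      = Real.exp (c ^ 2 / 2) * Real.exp (-(1/2) * (z - c) ^ 2) := by
    intro z
    rw [← Real.exp_add]
    ring_nf
  simp_rw [h]
  exact ((integrable_exp_neg_mul_sq (by norm_num : (0:ℝ) < 1/2)).comp_sub_right c).const_mul _

lemma exp_sub_sq_integral (c : ℝ) :
    ∫ z : ℝ, Real.exp (c * z - z ^ 2 / 2)
      = Real.exp (c ^ 2 / 2) * Real.sqrt (2 * Real.pi) := by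
  have h : ∀ z : ℝ, Real.exp (c * z - z ^ 2 / 2)
      = Real.exp (c ^ 2 / 2) * Real.exp (-(1/2) * (z - c) ^ 2) := by
    intro z
    rw [← Real.exp_add]
    ring_nf
  simp_rw [h]
  rw [integral_const_mul, integral_sub_right_eq_self (fun z : ℝ => Real.exp (-(1/2) * z ^ 2)) c,
    integral_gaussian]
  rw [Real.sqrt_mul (by norm_num : (0:ℝ) ≤ 2)]
  norm_num [mul_comm]

lemma gaussianReal_std_eq :
    gaussianReal 0 1 = volume.withDensity
      (fun x => ENNReal.ofReal ((Real.sqrt (2 * Real.pi))⁻¹ * Real.exp (- x ^ 2 / 2))) := by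
  rw [gaussianReal_of_var_ne_zero 0 one_ne_zero]
  congr 1
  ext x
  rw [gaussianPDF_def, gaussianPDFReal_def]
  norm_num

lemma smul_aux (c : ℝ) (x : ℝ) :
    (((Real.sqrt (2 * Real.pi))⁻¹ * Real.exp (- x ^ 2 / 2)).toNNReal : ℝ)
      = (Real.sqrt (2 * Real.pi))⁻¹ * Real.exp (- x ^ 2 / 2) := by
  rw [Real.coe_toNNReal]
  positivity

lemma integrable_exp_mul_gaussian (c : ℝ) :
    Integrable (fun z : ℝ => Real.exp (c * z)) (gaussianReal 0 1) := by
  rw [gaussianReal_std_eq]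
  have hmeas : Measurable fun x : ℝ =>
      ((Real.sqrt (2 * Real.pi))⁻¹ * Real.exp (- x ^ 2 / 2)).toNNReal := by
    fun_prop
  rw [show (fun x : ℝ => ENNReal.ofReal ((Real.sqrt (2 * Real.pi))⁻¹ * Real.exp (- x ^ 2 / 2)))
      = (fun x : ℝ => (((Real.sqrt (2 * Real.pi))⁻¹ * Real.exp (- x ^ 2 / 2)).toNNReal : ℝ≥0∞))
      from rfl]
  rw [integrable_withDensity_iff_integrable_smul hmeas]
  have : ∀ x : ℝ, (((Real.sqrt (2 * Real.pi))⁻¹ * Real.exp (- x ^ 2 / 2)).toNNReal : ℝ≥0)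
      • Real.exp (c * x) = (Real.sqrt (2 * Real.pi))⁻¹ * Real.exp (c * x - x ^ 2 / 2) := by
    intro x
    rw [NNReal.smul_def, smul_eq_mul, smul_aux c, mul_assoc, ← Real.exp_add]
    ring_nf
  simp_rw [this]
  exact (exp_sub_sq_integrable c).const_mul _

lemma integral_exp_mul_gaussian (c : ℝ) :
    ∫ z, Real.exp (c * z) ∂(gaussianReal 0 1) = Real.exp (c ^ 2 / 2) := by
  rw [gaussianReal_std_eq]
  have hmeas : Measurable fun x : ℝ =>
      ((Real.sqrt (2 * Real.pi))⁻¹ * Real.exp (- x ^ 2 / 2)).toNNReal := by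
    fun_prop
  rw [show (fun x : ℝ => ENNReal.ofReal ((Real.sqrt (2 * Real.pi))⁻¹ * Real.exp (- x ^ 2 / 2)))
      = (fun x : ℝ => (((Real.sqrt (2 * Real.pi))⁻¹ * Real.exp (- x ^ 2 / 2)).toNNReal : ℝ≥0∞))
      from rfl]
  rw [integral_withDensity_eq_integral_smul hmeas]
  have : ∀ x : ℝ, (((Real.sqrt (2 * Real.pi))⁻¹ * Real.exp (- x ^ 2 / 2)).toNNReal : ℝ≥0)
      • Real.exp (c * x) = (Real.sqrt (2 * Real.pi))⁻¹ * Real.exp (c * x - x ^ 2 / 2) := by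
    intro x
    rw [NNReal.smul_def, smul_eq_mul, smul_aux c, mul_assoc, ← Real.exp_add]
    ring_nf
  simp_rw [this]
  rw [integral_const_mul, exp_sub_sq_integral]
  rw [mul_comm (Real.exp (c ^ 2 / 2)), ← mul_assoc, inv_mul_cancel₀ (by positivity), one_mul]

set_option maxHeartbeats 1000000 in
lemma tail_aux (m : ℝ) (hm : 0 < m) (M : ℝ) (hM : 0 ≤ M) (φ : ℝ → ℝ) (hφ : Continuous φ)
    (A B C K : ℝ) (hK : 0 ≤ K) (hC : 0 ≤ C)
    (hright : ∀ x : ℝ, M ≤ x → φ x = A * x + B)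
    (hbound : ∀ y : ℝ, |φ y| ≤ C + K * |y|)
    (hlin : ∀ y : ℝ, |A * y + B| ≤ C + K * |y|) :
    TendstoUniformlyOn
      (fun (x : ℝ) (t : ℝ) =>
        (∫ z, Real.exp (m * φ (x + Real.sqrt t * z)) ∂(gaussianReal 0 1)) ^ (1 / m) *
          Real.exp (-(A * x + B + A ^ 2 * m * t / 2)))
      (fun _ => 1) atTop (Set.Icc (0 : ℝ) 1) := by
  set γ := gaussianReal 0 1 with hγ
  have hmK : 0 ≤ m * K := mul_nonneg hm.le hK
  -- integrability of the main integrand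
  have hint : ∀ (x t : ℝ), Integrable (fun z => Real.exp (m * φ (x + Real.sqrt t * z))) γ := by
    intro x t
    set s := Real.sqrt t with hs
    have hs0 : 0 ≤ s := Real.sqrt_nonneg t
    refine Integrable.mono' (g := fun z => Real.exp (m * (C + K * |x|)) *
      (Real.exp ((m * K * s) * z) + Real.exp (-(m * K * s) * z))) ?_ ?_ ?_
    · exact ((integrable_exp_mul_gaussian _).add (integrable_exp_mul_gaussian _)).const_mul _
    · exact (Real.continuous_exp.comp (continuous_const.mul (hφ.comp
        (continuous_const.add (continuous_const.mul continuous_id))))).aestronglyMeasurable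
    · refine ae_of_all _ fun z => ?_
      rw [Real.norm_eq_abs, Real.abs_exp]
      have h3 : |x + s * z| ≤ |x| + s * |z| := by
        calc |x + s * z| ≤ |x| + |s * z| := abs_add_le _ _
        _ = |x| + s * |z| := by rw [abs_mul, abs_of_nonneg hs0]
      have h2 : m * φ (x + s * z) ≤ m * (C + K * |x|) + (m * K * s) * |z| := by
        have h4 := (abs_le.mp (hbound (x + s * z))).2
        nlinarith [mul_le_mul_of_nonneg_left h3 hmK]
      have h4 : Real.exp ((m * K * s) * |z|)
          ≤ Real.exp ((m * K * s) * z) + Real.exp (-(m * K * s) * z) := by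
        rcases abs_cases z with ⟨h, _⟩ | ⟨h, _⟩
        · rw [h]; nlinarith [Real.exp_pos (-(m * K * s) * z)]
        · rw [h, mul_neg, ← neg_mul]
          nlinarith [Real.exp_pos ((m * K * s) * z)]
      calc Real.exp (m * φ (x + s * z))
          ≤ Real.exp (m * (C + K * |x|) + (m * K * s) * |z|) := Real.exp_le_exp.mpr h2
      _ = Real.exp (m * (C + K * |x|)) * Real.exp ((m * K * s) * |z|) := Real.exp_add _ _
      _ ≤ _ := mul_le_mul_of_nonneg_left h4 (Real.exp_pos _).le
  -- the purely linear computation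
  have hlinint : ∀ (x t : ℝ),
      Integrable (fun z => Real.exp (m * (A * (x + Real.sqrt t * z) + B))) γ := by
    intro x t
    have h1 : (fun z : ℝ => Real.exp (m * (A * (x + Real.sqrt t * z) + B)))
        = fun z => Real.exp (m * (A * x + B)) * Real.exp ((m * A * Real.sqrt t) * z) := by
      funext z; rw [← Real.exp_add]; ring_nf
    rw [h1]
    exact (integrable_exp_mul_gaussian _).const_mul _
  have hlinval : ∀ (x t : ℝ), 0 ≤ t →
      ∫ z, Real.exp (m * (A * (x + Real.sqrt t * z) + B)) ∂γ
        = Real.exp (m * (A * x + B) + m ^ 2 * A ^ 2 * t / 2) := by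
    intro x t ht
    have h1 : (fun z : ℝ => Real.exp (m * (A * (x + Real.sqrt t * z) + B)))
        = fun z => Real.exp (m * (A * x + B)) * Real.exp ((m * A * Real.sqrt t) * z) := by
      funext z; rw [← Real.exp_add]; ring_nf
    rw [h1, integral_const_mul, integral_exp_mul_gaussian, ← Real.exp_add]
    congr 1
    have h2 : Real.sqrt t ^ 2 = t := Real.sq_sqrt ht
    rw [mul_pow, mul_pow, h2]
  -- the key difference bound
  have key3 : ∀ x : ℝ, M + m * K ≤ x → ∀ t ∈ Icc (0:ℝ) 1,
      |(∫ z, Real.exp (m * φ (x + Real.sqrt t * z)) ∂γ)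
        - Real.exp (m * (A * x + B) + m ^ 2 * A ^ 2 * t / 2)|
        ≤ 2 * Real.exp (m * C + m * K * M) * Real.exp (-(x - M) ^ 2 / 2) := by
    intro x hx t ht
    have hs0 : 0 ≤ Real.sqrt t := Real.sqrt_nonneg t
    have hs1 : Real.sqrt t ≤ 1 := by
      rw [show (1:ℝ) = Real.sqrt 1 from Real.sqrt_one.symm]
      exact Real.sqrt_le_sqrt ht.2
    set s := Real.sqrt t with hs
    have hxM : M ≤ x := by linarith
    set μ := x - M - m * K with hμ
    have hμ0 : 0 ≤ μ := by rw [hμ]; linarith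
    set D : ℝ := 2 * Real.exp (m * C + 2 * m * K * M - m * K * x + μ * (M - x)) with hD
    set b : ℝ := -(μ + m * K) with hb
    have hpt : ∀ z : ℝ, |Real.exp (m * φ (x + s * z)) - Real.exp (m * (A * (x + s * z) + B))|
        ≤ D * Real.exp (b * z) := by
      intro z
      by_cases hz : M ≤ x + s * z
      · rw [hright _ hz, sub_self, abs_zero]
        positivity
      · push_neg at hz
        have hsz : s * z < M - x := by linarith
        have hzneg : z < 0 := by
          by_contra hzz
          push_neg at hzz
          nlinarith
        have hzMx : z ≤ M - x := by nlinarith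
        have hyM : x + s * z ≤ M := by linarith
        have habs : |x + s * z| ≤ 2 * M - (x + s * z) := by
          rcases abs_cases (x + s * z) with ⟨h, _⟩ | ⟨h, _⟩ <;> rw [h] <;> linarith
        have hKabs : K * |x + s * z| ≤ K * (2 * M - (x + s * z)) :=
          mul_le_mul_of_nonneg_left habs hK
        have heast : m * C + m * K * (2 * M - (x + s * z))
            = m * C + 2 * m * K * M - m * K * x - m * K * (s * z) := by ring
        have hf : m * φ (x + s * z) ≤ m * C + 2 * m * K * M - m * K * x - m * K * (s * z) := by
          have h1 := (abs_le.mp (hbound (x + s * z))).2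
          nlinarith
        have hg : m * (A * (x + s * z) + B)
            ≤ m * C + 2 * m * K * M - m * K * x - m * K * (s * z) := by
          have h1 := (abs_le.mp (hlin (x + s * z))).2
          nlinarith
        have h5 : -(m * K) * (s * z) ≤ -(m * K) * z := by
          nlinarith [mul_nonneg hmK (mul_nonneg (by linarith : (0:ℝ) ≤ -z) (by linarith : (0:ℝ) ≤ 1 - s))]
        have h6 : (0:ℝ) ≤ μ * (M - x - z) := mul_nonneg hμ0 (by linarith)
        have hbz : ∀ w : ℝ, w ≤ m * C + 2 * m * K * M - m * K * x - m * K * (s * z) →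
            Real.exp w ≤ Real.exp (m * C + 2 * m * K * M - m * K * x + μ * (M - x))
              * Real.exp (b * z) := by
          intro w hw
          rw [← Real.exp_add]
          apply Real.exp_le_exp.mpr
          have hbzz : b * z = -μ * z - m * K * z := by rw [hb]; ring
          nlinarith
        have e1 := hbz _ hf
        have e2 := hbz _ hg
        have p1 := Real.exp_pos (m * φ (x + s * z))
        have p2 := Real.exp_pos (m * (A * (x + s * z) + B))
        rw [hD, abs_le]
        constructor <;> linarith
    have hdiff : |(∫ z, Real.exp (m * φ (x + s * z)) ∂γ)
        - ∫ z, Real.exp (m * (A * (x + s * z) + B)) ∂γ| ≤ D * Real.exp (b ^ 2 / 2) := by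
      rw [← integral_sub (hint x t) (hlinint x t)]
      calc |∫ z, (Real.exp (m * φ (x + s * z)) - Real.exp (m * (A * (x + s * z) + B))) ∂γ|
          ≤ ∫ z, |Real.exp (m * φ (x + s * z)) - Real.exp (m * (A * (x + s * z) + B))| ∂γ := by
            simpa [Real.norm_eq_abs] using
              norm_integral_le_integral_norm (μ := γ)
                (fun z => Real.exp (m * φ (x + s * z)) - Real.exp (m * (A * (x + s * z) + B)))
      _ ≤ ∫ z, D * Real.exp (b * z) ∂γ := by
            refine integral_mono (((hint x t).sub (hlinint x t)).abs)
              ((integrable_exp_mul_gaussian b).const_mul D) hpt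
      _ = D * Real.exp (b ^ 2 / 2) := by rw [integral_const_mul, integral_exp_mul_gaussian]
    have hfin : D * Real.exp (b ^ 2 / 2)
        = 2 * Real.exp (m * C + m * K * M) * Real.exp (-(x - M) ^ 2 / 2) := by
      rw [hD, hb, hμ, mul_assoc (2:ℝ) (Real.exp _) (Real.exp _),
        mul_assoc (2:ℝ) (Real.exp _) (Real.exp _), ← Real.exp_add, ← Real.exp_add]
      congr 2
      ring
    rw [← hlinval x t ht.1]
    exact hfin ▸ hdiff
  -- final assembly
  rw [Metric.tendstoUniformlyOn_iff]
  intro ε hε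
  have hcont : ContinuousAt (fun u : ℝ => (1 + u) ^ (1/m : ℝ)) 0 := by
    exact ((continuous_const.add continuous_id).continuousAt).rpow_const (Or.inl (by norm_num))
  obtain ⟨δ, hδpos, hδ⟩ := Metric.continuousAt_iff.mp hcont ε hε
  have hquad : Tendsto (fun x : ℝ => 2 * m * C + m * K * M + m * K * x - (x - M) ^ 2 / 2)
      atTop atBot := by
    apply tendsto_atBot_mono' atTop (f₁ := fun x : ℝ => -x)
    · filter_upwards [eventually_ge_atTop
        (M + 2 * (2 * m * C + m * K * M) + 2 * m * K + 2 * M * (m * K + 1) + 4)] with x hx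
      have hmC : 0 ≤ m * C := mul_nonneg hm.le hC
      have hc0 : 0 ≤ 2 * m * C + m * K * M := by nlinarith [mul_nonneg hmK hM]
      have hMK : (0:ℝ) ≤ m * K * M := mul_nonneg hmK hM
      have hu0 : (0:ℝ) ≤ x - M := by nlinarith
      have h1 : (x - M) * (2 * (2 * m * C + m * K * M) + 2 * (m * K) + 2 * M * (m * K + 1) + 4)
          ≤ (x - M) * (x - M) := mul_le_mul_of_nonneg_left (by linarith) hu0
      have h2 : 2 * m * C + m * K * M ≤ (x - M) * (2 * m * C + m * K * M) := by
        nlinarith [mul_nonneg (by nlinarith : (0:ℝ) ≤ x - M - 1) hc0]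
      have h3 : M * (m * K + 1) ≤ (x - M) * (M * (m * K + 1)) := by
        nlinarith [mul_nonneg (by nlinarith : (0:ℝ) ≤ x - M - 1)
          (mul_nonneg hM (by linarith : (0:ℝ) ≤ m * K + 1))]
      nlinarith [h1, h2, h3, hu0]
    · exact tendsto_neg_atTop_atBot
  have hr : Tendsto (fun x : ℝ =>
      2 * Real.exp (2 * m * C + m * K * M + m * K * x - (x - M) ^ 2 / 2)) atTop (𝓝 0) := by
    have := (Real.tendsto_exp_atBot.comp hquad).const_mul (2:ℝ)
    simpa [Function.comp] using this
  have hev1 : ∀ᶠ x in atTop,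
      2 * Real.exp (2 * m * C + m * K * M + m * K * x - (x - M) ^ 2 / 2) < min δ 1 :=
    hr.eventually (gt_mem_nhds (lt_min hδpos one_pos))
  filter_upwards [hev1, eventually_ge_atTop (M + m * K), eventually_ge_atTop (0:ℝ)]
    with x h1 h2 h3 t ht
  set I := ∫ z, Real.exp (m * φ (x + Real.sqrt t * z)) ∂γ with hI
  set I₀ := Real.exp (m * (A * x + B) + m ^ 2 * A ^ 2 * t / 2) with hI₀
  have hI₀pos : 0 < I₀ := Real.exp_pos _
  have hInn : 0 ≤ I := integral_nonneg fun z => (Real.exp_pos _).le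
  have hbound3 := key3 x h2 t ht
  have hI₀low : Real.exp (-(m * C + m * K * x)) ≤ I₀ := by
    rw [hI₀]
    apply Real.exp_le_exp.mpr
    have h1' := (abs_le.mp (hlin x)).1
    have habsx : |x| = x := abs_of_nonneg h3
    rw [habsx] at h1'
    nlinarith [mul_nonneg (sq_nonneg (m * A)) ht.1, mul_le_mul_of_nonneg_left h1' hm.le]
  have hu : |I / I₀ - 1| ≤ 2 * Real.exp (2*m*C + m*K*M + m*K*x - (x - M)^2/2) := by
    have h7 : I / I₀ - 1 = (I - I₀) / I₀ := by field_simp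
    rw [h7, abs_div, abs_of_pos hI₀pos, div_le_iff₀ hI₀pos]
    have hinv : Real.exp (m*C + m*K*M) * Real.exp (-(x - M)^2/2)
        = Real.exp (2*m*C + m*K*M + m*K*x - (x-M)^2/2) * Real.exp (-(m*C+m*K*x)) := by
      rw [← Real.exp_add, ← Real.exp_add]; congr 1; ring
    calc |I - I₀| ≤ 2 * Real.exp (m*C+m*K*M) * Real.exp (-(x-M)^2/2) := hbound3
    _ = 2 * (Real.exp (2*m*C + m*K*M + m*K*x - (x-M)^2/2) * Real.exp (-(m*C+m*K*x))) := by
        rw [mul_assoc, hinv]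
    _ ≤ 2 * (Real.exp (2*m*C + m*K*M + m*K*x - (x-M)^2/2) * I₀) := by
        have := mul_le_mul_of_nonneg_left hI₀low
          (Real.exp_pos (2*m*C + m*K*M + m*K*x - (x-M)^2/2)).le
        linarith
    _ = 2 * Real.exp (2*m*C + m*K*M + m*K*x - (x-M)^2/2) * I₀ := by ring
  have hexp : Real.exp (-(A*x + B + A^2*m*t/2)) = (I₀ ^ (1/m : ℝ))⁻¹ := by
    rw [hI₀, ← Real.exp_mul, ← Real.exp_neg]
    congr 1
    field_simp
  have hF : I ^ (1/m : ℝ) * Real.exp (-(A*x+B+A^2*m*t/2))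
      = (1 + (I/I₀ - 1)) ^ (1/m : ℝ) := by
    rw [hexp, show (1:ℝ) + (I/I₀ - 1) = I/I₀ from by ring,
      Real.div_rpow hInn hI₀pos.le]
    exact (div_eq_mul_inv _ _).symm
  have hdist : dist (I/I₀ - 1) 0 < δ := by
    rw [Real.dist_eq, sub_zero]
    exact lt_of_le_of_lt hu (lt_of_lt_of_le h1 (min_le_left _ _))
  have hfin := hδ hdist
  simp only [add_zero, Real.one_rpow] at hfin
  rw [hF, dist_comm]
  exact hfin

lemma gaussian_neg_invariant :
    (gaussianReal 0 1).map (fun z : ℝ => -z) = gaussianReal 0 1 := by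
  have h := gaussianReal_map_const_mul (μ := 0) (v := 1) (-1)
  have h2 : (fun z : ℝ => (-1 : ℝ) * z) = fun z : ℝ => -z := by funext z; ring
  rw [h2] at h
  rw [h]
  norm_num

lemma integral_neg_arg (g : ℝ → ℝ) (hg : Continuous g) :
    ∫ z, g (-z) ∂(gaussianReal 0 1) = ∫ z, g z ∂(gaussianReal 0 1) := by
  conv_rhs => rw [← gaussian_neg_invariant]
  rw [integral_map (by fun_prop) hg.aestronglyMeasurable]

theorem asymptotics_linear_tails (m : ℝ) (hm : 0 < m) (M : ℝ) (hM : 0 ≤ M)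
    (φ : ℝ → ℝ) (hφ : Continuous φ) (A B A' B' : ℝ)
    (hright : ∀ x : ℝ, M ≤ x → φ x = A * x + B)
    (hleft : ∀ x : ℝ, x ≤ -M → φ x = A' * x + B') :
    TendstoUniformlyOn
      (fun (x : ℝ) (t : ℝ) =>
        (∫ z, Real.exp (m * φ (x + Real.sqrt t * z)) ∂(gaussianReal 0 1)) ^ (1 / m) *
          Real.exp (-(A * x + B + A ^ 2 * m * t / 2)))
      (fun _ => 1) atTop (Set.Icc (0 : ℝ) 1) ∧
    TendstoUniformlyOn
      (fun (x : ℝ) (t : ℝ) =>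
        (∫ z, Real.exp (m * φ (x + Real.sqrt t * z)) ∂(gaussianReal 0 1)) ^ (1 / m) *
          Real.exp (-(A' * x + B' + A' ^ 2 * m * t / 2)))
      (fun _ => 1) atBot (Set.Icc (0 : ℝ) 1) := by
  obtain ⟨C₀, hC₀⟩ := (isCompact_Icc (a := -M) (b := M)).exists_bound_of_continuousOn
    hφ.continuousOn
  set K := max |A| |A'| with hKdef
  set C := max C₀ 0 + max |B| |B'| with hCdef
  have hK : 0 ≤ K := le_trans (abs_nonneg A) (le_max_left _ _)
  have hC : 0 ≤ C := add_nonneg (le_max_right _ _) (le_trans (abs_nonneg B) (le_max_left _ _))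
  have hmaxB : ∀ b : ℝ, (b = B ∨ b = B') → ∀ a : ℝ, |a| ≤ K → ∀ y : ℝ,
      |a * y + b| ≤ C + K * |y| := by
    intro b hb a ha y
    have hb' : |b| ≤ C := by
      have h1 : |b| ≤ max |B| |B'| := by
        rcases hb with rfl | rfl
        · exact le_max_left _ _
        · exact le_max_right _ _
      calc |b| ≤ max |B| |B'| := h1
      _ ≤ C := le_add_of_nonneg_left (le_max_right C₀ 0)
    calc |a * y + b| ≤ |a * y| + |b| := abs_add_le _ _
    _ = |a| * |y| + |b| := by rw [abs_mul]
    _ ≤ K * |y| + C := add_le_add (mul_le_mul_of_nonneg_right ha (abs_nonneg y)) hb'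
    _ = C + K * |y| := by ring
  have hbound : ∀ y : ℝ, |φ y| ≤ C + K * |y| := by
    intro y
    rcases le_or_gt y (-M) with hy | hy
    · rw [hleft y hy]
      exact hmaxB B' (Or.inr rfl) A' (le_max_right _ _) y
    · rcases le_or_gt M y with hy2 | hy2
      · rw [hright y hy2]
        exact hmaxB B (Or.inl rfl) A (le_max_left _ _) y
      · have h1 := hC₀ y ⟨hy.le, hy2.le⟩
        rw [Real.norm_eq_abs] at h1
        have h2 : |φ y| ≤ max C₀ 0 := le_trans h1 (le_max_left _ _)
        have h3 : (0:ℝ) ≤ K * |y| := mul_nonneg hK (abs_nonneg y)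
        have h4 : (0:ℝ) ≤ max |B| |B'| := le_trans (abs_nonneg B) (le_max_left _ _)
        rw [hCdef]
        linarith
  constructor
  · exact tail_aux m hm M hM φ hφ A B C K hK hC hright hbound
      (hmaxB B (Or.inl rfl) A (le_max_left _ _))
  · have hψ : Continuous (fun y : ℝ => φ (-y)) := hφ.comp continuous_neg
    have hright' : ∀ x : ℝ, M ≤ x → (fun y : ℝ => φ (-y)) x = (-A') * x + B' := by
      intro x hx
      simp only
      rw [hleft (-x) (by linarith)]
      ring
    have hbound' : ∀ y : ℝ, |(fun y : ℝ => φ (-y)) y| ≤ C + K * |y| := by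
      intro y
      simpa [abs_neg] using hbound (-y)
    have hA' : |(-A')| ≤ K := by rw [abs_neg]; exact le_max_right _ _
    have haux := tail_aux m hm M hM (fun y => φ (-y)) hψ (-A') B' C K hK hC hright' hbound'
      (hmaxB B' (Or.inr rfl) (-A') hA')
    have hGF : ∀ x t : ℝ,
        (∫ z, Real.exp (m * φ (-(-x + Real.sqrt t * z))) ∂(gaussianReal 0 1)) ^ (1/m : ℝ) *
          Real.exp (-((-A') * (-x) + B' + (-A') ^ 2 * m * t / 2))
        = (∫ z, Real.exp (m * φ (x + Real.sqrt t * z)) ∂(gaussianReal 0 1)) ^ (1/m : ℝ) *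
          Real.exp (-(A' * x + B' + A' ^ 2 * m * t / 2)) := by
      intro x t
      have hI : ∫ z, Real.exp (m * φ (-(-x + Real.sqrt t * z))) ∂(gaussianReal 0 1)
          = ∫ z, Real.exp (m * φ (x + Real.sqrt t * z)) ∂(gaussianReal 0 1) := by
        rw [← integral_neg_arg (fun z => Real.exp (m * φ (x + Real.sqrt t * z))) (by continuity)]
        congr 1
        funext z
        have he : -(-x + Real.sqrt t * z) = x + Real.sqrt t * (-z) := by ring
        rw [he]
      rw [hI]
      congr 2
      ring
    rw [Metric.tendstoUniformlyOn_iff] at haux ⊢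
    intro ε hε
    have h := haux ε hε
    have h2 := tendsto_neg_atBot_atTop.eventually h
    filter_upwards [h2] with x hx t ht
    have h3 := hx t ht
    rw [hGF (x := x) (t := t)] at h3
    exact h3
end

section
/- Let φ : ℝ → ℝ be twice differentiable with bounded first and second derivatives and let m > 0. Then for every x ∈ ℝ and t ∈ [0,1], the function y ↦ F_{φ,m}(y,t) is differentiable at x and its derivative equals E[φ'(x + √t·Z)·exp(m·φ(x + √t·Z))] / E[exp(m·φ(x + √t·Z))]. -/
open MeasureTheory ProbabilityTheory Set

lemma integrable_exp_abs_gaussian (b : ℝ) :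
    Integrable (fun z => Real.exp (b * |z|)) (gaussianReal 0 1) := by
  rw [gaussianReal_of_var_ne_zero 0 one_ne_zero,
    integrable_withDensity_iff (measurable_gaussianPDF 0 1)
      (Filter.Eventually.of_forall fun x => ENNReal.ofReal_lt_top)]
  have hpdf : ∀ z : ℝ, (gaussianPDF 0 1 z).toReal = gaussianPDFReal 0 1 z := fun z =>
    ENNReal.toReal_ofReal (gaussianPDFReal_nonneg 0 1 z)
  simp only [hpdf]
  have hint : Integrable
      (fun z : ℝ => ((Real.sqrt (2 * Real.pi))⁻¹ * Real.exp (b ^ 2)) *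
        Real.exp (-(1/4 : ℝ) * z ^ 2)) volume :=
    (integrable_exp_neg_mul_sq (by norm_num)).const_mul _
  refine hint.mono' ?_ ?_
  · exact (Real.continuous_exp.comp (continuous_const.mul continuous_abs)).aestronglyMeasurable.mul
      (stronglyMeasurable_gaussianPDFReal 0 1).aestronglyMeasurable
  · refine Filter.Eventually.of_forall fun z => ?_
    have hnn : 0 ≤ Real.exp (b * |z|) * gaussianPDFReal 0 1 z :=
      mul_nonneg (Real.exp_nonneg _) (gaussianPDFReal_nonneg 0 1 z)
    rw [Real.norm_of_nonneg hnn]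
    unfold gaussianPDFReal
    simp only [NNReal.coe_one, mul_one, sub_zero]
    rw [mul_comm, mul_assoc, ← Real.exp_add, mul_assoc, ← Real.exp_add]
    refine mul_le_mul_of_nonneg_left (Real.exp_le_exp.2 ?_)
      (inv_nonneg.2 (Real.sqrt_nonneg _))
    have h1 : b * |z| ≤ |b| * |z| := mul_le_mul_of_nonneg_right (le_abs_self b) (abs_nonneg z)
    nlinarith [sq_nonneg (|z| / 2 - |b|), sq_abs z, sq_abs b]

theorem parisiF_hasDerivAt (φ : ℝ → ℝ) (hφ : TwiceDiffBounded φ) (m : ℝ) (hm : 0 < m) :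
    ∀ (x : ℝ), ∀ t ∈ Set.Icc (0 : ℝ) 1,
      HasDerivAt (fun y => parisiF φ m y t)
        ((∫ z, deriv φ (x + Real.sqrt t * z) *
            Real.exp (m * φ (x + Real.sqrt t * z)) ∂(gaussianReal 0 1)) /
          (∫ z, Real.exp (m * φ (x + Real.sqrt t * z)) ∂(gaussianReal 0 1))) x := by
  intro x t ht
  obtain ⟨hφd, hφ'd, ⟨C, hC⟩, -⟩ := hφ
  have hC0 : 0 ≤ C := (abs_nonneg _).trans (hC 0)
  set μ := gaussianReal 0 1
  set s := Real.sqrt t with hs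
  have hs0 : 0 ≤ s := Real.sqrt_nonneg t
  have hs1 : s ≤ 1 := Real.sqrt_le_one.mpr ht.2
  -- amplitude bound for φ
  have hφ_lin : ∀ y : ℝ, φ y ≤ φ 0 + C * |y| := by
    intro y
    have := Convex.norm_image_sub_le_of_norm_deriv_le (s := Set.univ) (f := φ)
      (fun z _ => hφd z) (fun z _ => by simpa [Real.norm_eq_abs] using hC z)
      convex_univ (mem_univ 0) (mem_univ y)
    simp only [Real.norm_eq_abs, sub_zero] at this
    have := (abs_le.1 this).2
    linarith
  have hφcont : Continuous φ := hφd.continuous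
  have hφ'cont : Continuous (deriv φ) := hφ'd.continuous
  -- the inner integral as a function
  set g : ℝ → ℝ := fun y => ∫ z, Real.exp (m * φ (y + s * z)) ∂μ with hg
  -- dominated convergence derivative
  have key : Integrable (fun z => (m * deriv φ (x + s * z)) * Real.exp (m * φ (x + s * z))) μ ∧
      HasDerivAt g (∫ z, (m * deriv φ (x + s * z)) * Real.exp (m * φ (x + s * z)) ∂μ) x := by
    apply hasDerivAt_integral_of_dominated_loc_of_deriv_le (s := Metric.ball x 1)
      (F := fun y z => Real.exp (m * φ (y + s * z)))
      (F' := fun y z => (m * deriv φ (y + s * z)) * Real.exp (m * φ (y + s * z)))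
      (x₀ := x) (μ := μ)
      (bound := fun z => (m * C) * Real.exp (m * (φ 0 + C * (|x| + 1)) + (m * C) * |z|))
      (Metric.ball_mem_nhds x one_pos)
    · exact Filter.Eventually.of_forall fun y =>
        (Real.continuous_exp.comp (continuous_const.mul
          (hφcont.comp (continuous_const.add (continuous_const.mul
            continuous_id))))).aestronglyMeasurable
    · -- integrability at x
      have hint : Integrable (fun z : ℝ =>
          Real.exp (m * (φ 0 + C * |x|)) * Real.exp ((m * C) * |z|)) μ :=
        (integrable_exp_abs_gaussian (m * C)).const_mul _
      refine hint.mono' ((Real.continuous_exp.comp (continuous_const.mul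
          (hφcont.comp (continuous_const.add (continuous_const.mul
            continuous_id))))).aestronglyMeasurable) ?_
      refine Filter.Eventually.of_forall fun z => ?_
      rw [Real.norm_of_nonneg (Real.exp_nonneg _), ← Real.exp_add]
      apply Real.exp_le_exp.2
      have h1 : φ (x + s * z) ≤ φ 0 + C * |x + s * z| := hφ_lin _
      have h2 : |x + s * z| ≤ |x| + |z| := by
        calc |x + s * z| ≤ |x| + |s * z| := abs_add_le _ _
        _ ≤ |x| + |z| := by
            rw [abs_mul, abs_of_nonneg hs0]
            nlinarith [abs_nonneg z]
      have h3 : φ (x + s * z) ≤ φ 0 + C * |x| + C * |z| := by nlinarith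
      nlinarith [mul_le_mul_of_nonneg_left h3 hm.le]
    · exact ((continuous_const.mul (hφ'cont.comp (continuous_const.add
        (continuous_const.mul continuous_id)))).mul (Real.continuous_exp.comp
        (continuous_const.mul (hφcont.comp (continuous_const.add
          (continuous_const.mul continuous_id)))))).aestronglyMeasurable
    · -- bound on derivative in ball x 1
      refine Filter.Eventually.of_forall fun z y hy => ?_
      have h1 : |y| ≤ |x| + 1 := by
        have := abs_sub_abs_le_abs_sub y x
        have h2 : |y - x| < 1 := by simpa [Real.dist_eq] using Metric.mem_ball.1 hy
        linarith
      have h3 : φ (y + s * z) ≤ φ 0 + C * (|x| + 1) + C * |z| := by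
        have := hφ_lin (y + s * z)
        have h4 : |y + s * z| ≤ |x| + 1 + |z| := by
          calc |y + s * z| ≤ |y| + |s * z| := abs_add_le _ _
          _ ≤ |x| + 1 + |z| := by
              rw [abs_mul, abs_of_nonneg hs0]
              nlinarith [abs_nonneg z]
        nlinarith
      rw [Real.norm_eq_abs, abs_mul, abs_mul, abs_of_pos hm,
        abs_of_nonneg (Real.exp_nonneg _), mul_assoc, mul_assoc]
      gcongr
      · exact hC _
      · nlinarith [mul_le_mul_of_nonneg_left h3 hm.le]
    · exact ((integrable_exp_abs_gaussian (m * C)).const_mul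
          (m * C * Real.exp (m * (φ 0 + C * (|x| + 1))))).congr
        (Filter.Eventually.of_forall fun z => by simp only [Real.exp_add]; ring)
    · -- differentiability
      refine Filter.Eventually.of_forall fun z y _ => ?_
      have h1 : HasDerivAt (fun y => y + s * z) 1 y := by
        simpa using (hasDerivAt_id y).add_const (s * z)
      have h2 : HasDerivAt (fun y => φ (y + s * z)) (deriv φ (y + s * z)) y := by
        simpa [Function.comp_def] using ((hφd (y + s * z)).hasDerivAt).comp y h1
      have h3 : HasDerivAt (fun y => m * φ (y + s * z)) (m * deriv φ (y + s * z)) y :=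
        h2.const_mul m
      simpa [mul_comm] using h3.exp
  obtain ⟨hint', hder⟩ := key
  -- positivity of g x
  have hgint : Integrable (fun z => Real.exp (m * φ (x + s * z))) μ := by
    have hint : Integrable (fun z : ℝ =>
        Real.exp (m * (φ 0 + C * |x|)) * Real.exp ((m * C) * |z|)) μ :=
      (integrable_exp_abs_gaussian (m * C)).const_mul _
    refine hint.mono' ((Real.continuous_exp.comp (continuous_const.mul
        (hφcont.comp (continuous_const.add (continuous_const.mul
          continuous_id))))).aestronglyMeasurable) ?_
    refine Filter.Eventually.of_forall fun z => ?_
    rw [Real.norm_of_nonneg (Real.exp_nonneg _), ← Real.exp_add]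
    apply Real.exp_le_exp.2
    have h1 : φ (x + s * z) ≤ φ 0 + C * |x + s * z| := hφ_lin _
    have h2 : |x + s * z| ≤ |x| + |z| := by
      calc |x + s * z| ≤ |x| + |s * z| := abs_add_le _ _
      _ ≤ |x| + |z| := by
          rw [abs_mul, abs_of_nonneg hs0]
          nlinarith [abs_nonneg z]
    have h3 : φ (x + s * z) ≤ φ 0 + C * |x| + C * |z| := by nlinarith
    nlinarith [mul_le_mul_of_nonneg_left h3 hm.le]
  have hgpos : 0 < g x := by
    rw [hg]
    rw [integral_pos_iff_support_of_nonneg_ae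
      (Filter.Eventually.of_forall fun z => (Real.exp_pos _).le) hgint]
    have : (Function.support fun z => Real.exp (m * φ (x + s * z))) = Set.univ := by
      ext z; simp [Function.support, (Real.exp_pos _).ne']
    rw [this]
    simp
  -- compose with log and const_mul
  have hlog : HasDerivAt (fun y => Real.log (g y))
      ((g x)⁻¹ * (∫ z, (m * deriv φ (x + s * z)) * Real.exp (m * φ (x + s * z)) ∂μ)) x := by
    simpa [mul_comm, Function.comp_def] using (Real.hasDerivAt_log hgpos.ne').comp x hder
  have hfinal := hlog.const_mul (1 / m)
  have heq : ∫ z, (m * deriv φ (x + s * z)) * Real.exp (m * φ (x + s * z)) ∂μ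
      = m * ∫ z, deriv φ (x + s * z) * Real.exp (m * φ (x + s * z)) ∂μ := by
    rw [← integral_const_mul]
    congr 1; ext z; ring
  rw [heq] at hfinal
  have hrw : (1 / m) * ((g x)⁻¹ * (m * ∫ z, deriv φ (x + s * z) *
      Real.exp (m * φ (x + s * z)) ∂μ))
      = (∫ z, deriv φ (x + s * z) * Real.exp (m * φ (x + s * z)) ∂μ) / g x := by
    field_simp
  rw [hrw] at hfinal
  exact hfinal
end

section
/- Let 0 < m1 ≤ m2 be reals, let α ∈ [0,1], and set n = α·m1 + (1−α)·m2. Let A1, A2 be reals such that either 0 ≤ A1 ≤ A2 or A2 ≤ A1 ≤ 0. Then n·(α·A1 + (1−α)·A2)² ≤ α·m1·A1² + (1−α)·m2·A2². -/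
open Set

theorem quadratic_interpolation_inequality (m1 m2 α : ℝ) (hm1 : 0 < m1) (hm12 : m1 ≤ m2)
    (hα : α ∈ Set.Icc (0 : ℝ) 1) (A1 A2 : ℝ)
    (hA : (0 ≤ A1 ∧ A1 ≤ A2) ∨ (A2 ≤ A1 ∧ A1 ≤ 0)) :
    (α * m1 + (1 - α) * m2) * (α * A1 + (1 - α) * A2) ^ 2
      ≤ α * m1 * A1 ^ 2 + (1 - α) * m2 * A2 ^ 2 := by
  obtain ⟨h0, h1⟩ := hα
  have hab : 0 ≤ α * (1 - α) := mul_nonneg h0 (by linarith)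
  rcases hA with ⟨h2, h3⟩ | ⟨h2, h3⟩
  · have k1 : 0 ≤ m2 * A2 - m1 * A1 := by nlinarith
    have k2 : 0 ≤ α * A1 + (1 - α) * A2 := by nlinarith
    nlinarith [mul_nonneg (mul_nonneg hab (sub_nonneg.2 h3)) k1,
      mul_nonneg (mul_nonneg (mul_nonneg hab (sub_nonneg.2 h3)) (sub_nonneg.2 hm12)) k2]
  · have k1 : 0 ≤ m1 * A1 - m2 * A2 := by nlinarith
    have k2 : α * A1 + (1 - α) * A2 ≤ 0 := by nlinarith
    nlinarith [mul_nonneg (mul_nonneg hab (sub_nonneg.2 h2)) k1,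
      mul_nonneg (mul_nonneg (mul_nonneg hab (sub_nonneg.2 h2)) (sub_nonneg.2 hm12)) (neg_nonneg.2 k2)]
end
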